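/- arXiv:2309.05596 — 5 statements merged into one kernel-verified Lean document; each statement's English description precedes it below -/
import Mathlib

section
/- Let q2 > 0, let h1 : [0,∞) → ℝ satisfy h1(t) ≥ 0 for all t ≥ 0, and let β : [0,1] × [0,∞) → ℝ be continuously differentiable and satisfy ∂t β(x,t) = q2 ∂x β(x,t) on [0,1] × [0,∞) with β(1,t) = h1(t) for all t ≥ 0. Then β(x,t) ≥ 0 for all x ∈ [0,1] and all t ≥ 1/q2. -/
open Set

/-- If `ξ` lies between `a` and `b`, then `|ξ - a| ≤ |b - a|`. -/
lemma abs_sub_le_of_between {a b ξ : ℝ} (h1 : min a b ≤ ξ) (h2 : ξ ≤ max a b) :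
    |ξ - a| ≤ |b - a| := by
  rcases le_total a b with h | h
  · rw [min_eq_left h] at h1; rw [max_eq_right h] at h2
    rw [abs_of_nonneg (by linarith), abs_of_nonneg (by linarith)]; linarith
  · rw [min_eq_right h] at h1; rw [max_eq_left h] at h2
    rw [abs_of_nonpos (by linarith), abs_of_nonpos (by linarith)]; linarith

/-- Mean value theorem on an interval with possibly unordered endpoints. -/
lemma mvt_unordered (f f' : ℝ → ℝ) {a b : ℝ} (hne : a ≠ b)
    (hcont : ContinuousOn f (Icc (min a b) (max a b)))
    (hder : ∀ y ∈ Ioo (min a b) (max a b), HasDerivAt f (f' y) y) :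
    ∃ ξ ∈ Ioo (min a b) (max a b), f b - f a = f' ξ * (b - a) := by
  rcases hne.lt_or_gt with h | h
  · obtain ⟨ξ, hξ, he⟩ := exists_hasDerivAt_eq_slope f f' h
      (by rwa [min_eq_left h.le, max_eq_right h.le] at hcont)
      (fun y hy => hder y (by rwa [min_eq_left h.le, max_eq_right h.le]))
    refine ⟨ξ, by rwa [min_eq_left h.le, max_eq_right h.le], ?_⟩
    rw [he, div_mul_cancel₀ _ (sub_ne_zero.2 h.ne')]
  · obtain ⟨ξ, hξ, he⟩ := exists_hasDerivAt_eq_slope f f' h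
      (by rwa [min_eq_right h.le, max_eq_left h.le] at hcont)
      (fun y hy => hder y (by rwa [min_eq_right h.le, max_eq_left h.le]))
    refine ⟨ξ, by rwa [min_eq_right h.le, max_eq_left h.le], ?_⟩
    rw [he, show (b - a) = -(a - b) by ring, mul_neg,
      div_mul_cancel₀ _ (sub_ne_zero.2 h.ne')]
    ring

/-- Nonnegativity of the transport-PDE barrier:
if `∂t β = q2 ∂x β` on `[0,1] × [0,∞)` with `β(1,t) = h1(t) ≥ 0`,
then `β(x,t) ≥ 0` for all `x ∈ [0,1]` and `t ≥ 1/q2`. -/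
theorem transport_barrier_nonneg
    (q2 : ℝ) (hq2 : 0 < q2)
    (β βx βt : ℝ → ℝ → ℝ) (h1 : ℝ → ℝ)
    (hh1 : ∀ t ∈ Ici (0:ℝ), 0 ≤ h1 t)
    -- continuous differentiability of β on [0,1] × [0,∞):
    (hβc : ContinuousOn (fun p : ℝ × ℝ => β p.1 p.2) (Icc 0 1 ×ˢ Ici 0))
    (hβx : ∀ x ∈ Icc (0:ℝ) 1, ∀ t ∈ Ici (0:ℝ),
      HasDerivWithinAt (fun x' => β x' t) (βx x t) (Icc 0 1) x)
    (hβt : ∀ x ∈ Icc (0:ℝ) 1, ∀ t ∈ Ici (0:ℝ),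
      HasDerivWithinAt (fun t' => β x t') (βt x t) (Ici 0) t)
    (hβxc : ContinuousOn (fun p : ℝ × ℝ => βx p.1 p.2) (Icc 0 1 ×ˢ Ici 0))
    (hβtc : ContinuousOn (fun p : ℝ × ℝ => βt p.1 p.2) (Icc 0 1 ×ˢ Ici 0))
    -- the transport equation ∂t β = q2 ∂x β on [0,1] × [0,∞):
    (hPDE : ∀ x ∈ Icc (0:ℝ) 1, ∀ t ∈ Ici (0:ℝ), βt x t = q2 * βx x t)
    -- boundary condition β(1,t) = h1(t):
    (hBC : ∀ t ∈ Ici (0:ℝ), β 1 t = h1 t) :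
    ∀ x ∈ Icc (0:ℝ) 1, ∀ t, 1 / q2 ≤ t → 0 ≤ β x t := by
  intro x hx t ht
  obtain ⟨hx0, hx1⟩ := hx
  have hq2' : q2 ≠ 0 := hq2.ne'
  set c : ℝ := (1 - x) / q2 with hcdef
  have hc0 : 0 ≤ c := div_nonneg (by linarith) hq2.le
  have hct : c ≤ t := by
    have h1 : c ≤ 1 / q2 := by
      rw [hcdef, div_le_div_iff₀ hq2 hq2]; nlinarith
    linarith
  have hq2c : q2 * c = 1 - x := by rw [hcdef]; field_simp
  -- helper: membership of characteristic points
  have hmemx : ∀ s ∈ Icc (0:ℝ) c, x + q2 * s ∈ Icc (0:ℝ) 1 := by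
    intro s hs
    constructor
    · nlinarith [hs.1]
    · nlinarith [hs.2]
  have hmemt : ∀ s ∈ Icc (0:ℝ) c, t - s ∈ Ici (0:ℝ) := by
    intro s hs
    simp only [mem_Ici]
    linarith [hs.2]
  set g : ℝ → ℝ := fun s => β (x + q2 * s) (t - s) with hgdef
  -- key: g has derivative 0 within Icc 0 c at each point
  have key : ∀ s ∈ Icc (0:ℝ) c, HasDerivWithinAt g 0 (Icc 0 c) s := by
    intro s hs
    set a : ℝ := x + q2 * s with hadef
    set u : ℝ := t - s with hudef
    have haI : a ∈ Icc (0:ℝ) 1 := hmemx s hs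
    have huI : u ∈ Ici (0:ℝ) := hmemt s hs
    rw [hasDerivWithinAt_iff_tendsto_slope]
    rw [Metric.tendsto_nhdsWithin_nhds]
    intro ε hε
    -- continuity of βx at (a, u)
    have hcw : ContinuousWithinAt (fun p : ℝ × ℝ => βx p.1 p.2)
        (Icc 0 1 ×ˢ Ici 0) (a, u) := hβxc _ (by exact ⟨haI, huI⟩)
    rw [Metric.continuousWithinAt_iff] at hcw
    have hε' : 0 < ε / (2 * q2) := by positivity
    obtain ⟨δ0, hδ0pos, hδ0⟩ := hcw _ hε'
    refine ⟨δ0 / (q2 + 1), by positivity, ?_⟩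
    rintro s' ⟨hs', hss'⟩ hdist
    have hss'ne : s' ≠ s := by simpa using hss'
    have hds : |s' - s| < δ0 / (q2 + 1) := by rwa [Real.dist_eq] at hdist
    set a' : ℝ := x + q2 * s' with ha'def
    set u' : ℝ := t - s' with hu'def
    have ha'I : a' ∈ Icc (0:ℝ) 1 := hmemx s' hs'
    have hu'I : u' ∈ Ici (0:ℝ) := hmemt s' hs'
    -- MVT in the x-slot at time u'
    have haa' : a ≠ a' := by
      simp only [hadef, ha'def]
      intro h
      exact hss'ne (by
        have := mul_left_cancel₀ hq2' (by linarith : q2 * s = q2 * s')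
        linarith)
    have hminx : (0:ℝ) ≤ min a a' := le_min haI.1 ha'I.1
    have hmaxx : max a a' ≤ 1 := max_le haI.2 ha'I.2
    obtain ⟨ξ, hξ, heq1⟩ := mvt_unordered (fun y => β y u') (fun y => βx y u') haa'
      (by
        have hco : ContinuousOn ((fun p : ℝ × ℝ => β p.1 p.2) ∘ (fun y : ℝ => (y, u')))
            (Icc 0 1) :=
          hβc.comp (Continuous.continuousOn (by fun_prop))
            (fun y hy => ⟨hy, hu'I⟩)
        exact hco.mono (fun y hy => ⟨le_trans hminx hy.1, le_trans hy.2 hmaxx⟩))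
      (by
        intro y hy
        have hyI : y ∈ Icc (0:ℝ) 1 := ⟨le_trans hminx hy.1.le, le_trans hy.2.le hmaxx⟩
        exact (hβx y hyI u' hu'I).hasDerivAt
          (Icc_mem_nhds (lt_of_le_of_lt hminx hy.1) (lt_of_lt_of_le hy.2 hmaxx)))
    have hξI : ξ ∈ Icc (0:ℝ) 1 := ⟨le_trans hminx hξ.1.le, le_trans hξ.2.le hmaxx⟩
    -- MVT in the t-slot at position a
    have huu' : u ≠ u' := by
      simp only [hudef, hu'def]
      intro h; exact hss'ne (by linarith)
    have hminu : (0:ℝ) ≤ min u u' := le_min huI hu'I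
    obtain ⟨τ, hτ, heq2⟩ := mvt_unordered (fun r => β a r) (fun r => βt a r) huu'
      (by
        have hco : ContinuousOn ((fun p : ℝ × ℝ => β p.1 p.2) ∘ (fun r : ℝ => (a, r)))
            (Ici 0) :=
          hβc.comp (Continuous.continuousOn (by fun_prop))
            (fun r hr => ⟨haI, hr⟩)
        exact hco.mono (fun r hr => le_trans hminu hr.1))
      (by
        intro r hr
        have hrI : r ∈ Ici (0:ℝ) := le_trans hminu hr.1.le
        exact (hβt a haI r hrI).hasDerivAt
          (Filter.mem_of_superset (Ioi_mem_nhds (lt_of_le_of_lt hminu hr.1))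
            Ioi_subset_Ici_self))
    have hτI : τ ∈ Ici (0:ℝ) := le_trans hminu hτ.1.le
    -- combine via the PDE
    have hPDEτ : βt a τ = q2 * βx a τ := hPDE a haI τ hτI
    have hdiff : g s' - g s = q2 * (s' - s) * (βx ξ u' - βx a τ) := by
      have e1 : β a' u' - β a u' = βx ξ u' * (a' - a) := heq1
      have e2 : β a u' - β a u = βt a τ * (u' - u) := heq2
      have hgg : g s' - g s = (β a' u' - β a u') + (β a u' - β a u) := by
        simp only [hgdef, hadef, ha'def, hudef, hu'def]; ring
      rw [hgg, e1, e2, hPDEτ]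
      have ha'a : a' - a = q2 * (s' - s) := by simp only [hadef, ha'def]; ring
      have hu'u : u' - u = -(s' - s) := by simp only [hudef, hu'def]; ring
      rw [ha'a, hu'u]; ring
    have hslope : slope g s s' = q2 * (βx ξ u' - βx a τ) := by
      rw [slope_def_field, div_eq_iff (sub_ne_zero.2 hss'ne), hdiff]; ring
    have hdsδ : |s' - s| < δ0 := lt_of_lt_of_le hds (div_le_self hδ0pos.le (by linarith))
    have hu'u_abs : |u' - u| = |s' - s| := by
      simp only [hudef, hu'def]
      rw [show t - s' - (t - s) = -(s' - s) by ring, abs_neg]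
    -- distance estimates
    have hd1 : dist (βx ξ u') (βx a u) < ε / (2 * q2) := by
      have hdp : dist ((ξ, u') : ℝ × ℝ) (a, u) < δ0 := by
        rw [Prod.dist_eq]
        apply max_lt
        · rw [Real.dist_eq]
          have h1 : |ξ - a| ≤ |a' - a| := abs_sub_le_of_between hξ.1.le hξ.2.le
          have h2 : |a' - a| = q2 * |s' - s| := by
            rw [show a' - a = q2 * (s' - s) by simp only [hadef, ha'def]; ring,
              abs_mul, abs_of_pos hq2]
          calc |ξ - a| ≤ q2 * |s' - s| := h1.trans_eq h2
            _ < q2 * (δ0 / (q2 + 1)) := by exact mul_lt_mul_of_pos_left hds hq2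
            _ ≤ δ0 := by
                rw [div_eq_inv_mul, ← mul_assoc]
                apply mul_le_of_le_one_left hδ0pos.le
                rw [mul_inv_le_iff₀ (by positivity), one_mul]
                linarith
        · rw [Real.dist_eq, hu'u_abs]; exact hdsδ
      exact hδ0 ⟨hξI, hu'I⟩ hdp
    have hd2 : dist (βx a τ) (βx a u) < ε / (2 * q2) := by
      have hdp : dist ((a, τ) : ℝ × ℝ) (a, u) < δ0 := by
        rw [Prod.dist_eq]
        apply max_lt
        · simpa using hδ0pos
        · rw [Real.dist_eq]
          have h1 : |τ - u| ≤ |u' - u| := abs_sub_le_of_between hτ.1.le hτ.2.le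
          rw [hu'u_abs] at h1
          exact lt_of_le_of_lt h1 hdsδ
      exact hδ0 ⟨haI, hτI⟩ hdp
    -- final bound
    rw [hslope, Real.dist_eq, sub_zero, abs_mul, abs_of_pos hq2]
    have htri : |βx ξ u' - βx a τ| ≤ |βx ξ u' - βx a u| + |βx a u - βx a τ| :=
      abs_sub_le _ _ _
    rw [Real.dist_eq] at hd1 hd2
    have hd2' : |βx a u - βx a τ| < ε / (2 * q2) := by rwa [abs_sub_comm]
    calc q2 * |βx ξ u' - βx a τ|
        ≤ q2 * (|βx ξ u' - βx a u| + |βx a u - βx a τ|) := by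
          exact mul_le_mul_of_nonneg_left htri hq2.le
      _ < q2 * (ε / (2 * q2) + ε / (2 * q2)) := by
          exact mul_lt_mul_of_pos_left (by linarith) hq2
      _ = ε := by field_simp; ring
  -- g is constant on [0, c]
  have hconst : ‖g c - g 0‖ ≤ 0 * ‖c - 0‖ :=
    Convex.norm_image_sub_le_of_norm_hasDerivWithin_le
      (f' := fun _ => (0:ℝ)) key (fun _ _ => by simp) (convex_Icc 0 c)
      (left_mem_Icc.2 hc0) (right_mem_Icc.2 hc0)
  have hgc : g 0 = g c := by
    rw [zero_mul] at hconst
    have h := norm_le_zero_iff.1 hconst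
    linarith [sub_eq_zero.1 h]
  have hg0 : g 0 = β x t := by simp [hgdef]
  have hgcval : g c = β 1 (t - c) := by
    simp only [hgdef]
    congr 1
    linarith [hq2c]
  have htc : t - c ∈ Ici (0:ℝ) := by simp only [mem_Ici]; linarith
  rw [← hg0, hgc, hgcval, hBC _ htc]
  exact hh1 _ htc
end

section
/- Let m, n ≥ 1 be integers, q2 > 0, b > 0, and let c_1, …, c_m and κ_1, …, κ_n be positive real numbers. Suppose: (i) h = (h_1, …, h_m) : [0,∞) → ℝ^m is continuously differentiable with h_i' = −c_i h_i + h_{i+1} for 1 ≤ i ≤ m−1 and h_m' = −c_m h_m; (ii) β : [0,1] × [0,∞) → ℝ is continuously differentiable with ∂t β(x,t) = q2 ∂x β(x,t) and β(1,t) = h_1(t) for all t ≥ 0; (iii) Z = (Z_1, …, Z_n) : [0,∞) → ℝ^n is continuously differentiable with Z_j' = −κ_j Z_j + Z_{j+1} for 1 ≤ j ≤ n−1 and Z_n'(t) = −κ_n Z_n(t) + b·β(0,t). If h_i(0) > 0 for all 1 ≤ i ≤ m and Z_j(1/q2) > 0 for all 1 ≤ j ≤ n, then h_i(t) ≥ 0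 for all i and all t ≥ 0, β(x,t) ≥ 0 for all x ∈ [0,1] and all t ≥ 1/q2, and Z_j(t) ≥ 0 for all j and all t ≥ 1/q2; in particular Z_1(t) ≥ 0 for all t ≥ 1/q2. -/
open Set Topology Filter


lemma ode_nonneg (k T : ℝ) (y g : ℝ → ℝ)
    (hy : ∀ t, T ≤ t → HasDerivAt y (-k * y t + g t) t)
    (hg : ∀ t, T ≤ t → 0 ≤ g t) (hT0 : 0 ≤ y T) :
    ∀ t, T ≤ t → 0 ≤ y t := by
  intro t ht
  set ψ : ℝ → ℝ := fun u => Real.exp (k * u) * y u with hψ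
  have hψd : ∀ u, T ≤ u → HasDerivAt ψ (Real.exp (k * u) * g u) u := by
    intro u hu
    have h1 : HasDerivAt (fun u : ℝ => Real.exp (k * u)) (Real.exp (k * u) * k) u :=
      (Real.hasDerivAt_exp (k * u)).comp u (by simpa using (hasDerivAt_id u).const_mul k)
    have := h1.mul (hy u hu)
    exact this.congr_deriv (by ring)
  have mono : MonotoneOn ψ (Ici T) := by
    apply monotoneOn_of_deriv_nonneg (convex_Ici T)
    · exact fun u hu => (hψd u hu).continuousAt.continuousWithinAt
    · intro u hu
      rw [interior_Ici] at hu
      exact (hψd u hu.le).differentiableAt.differentiableWithinAt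
    · intro u hu
      rw [interior_Ici] at hu
      rw [(hψd u hu.le).deriv]
      exact mul_nonneg (Real.exp_pos _).le (hg u hu.le)
  have h1 : ψ T ≤ ψ t := mono self_mem_Ici ht ht
  have h2 : 0 ≤ ψ T := mul_nonneg (Real.exp_pos _).le hT0
  have h3 : 0 ≤ Real.exp (k * t) * y t := le_trans h2 h1
  nlinarith [Real.exp_pos (k * t)]



lemma mvt_bound_le {f f' : ℝ → ℝ} {a b c ε : ℝ} (hab : a ≤ b)
    (hf : ∀ u ∈ Icc a b, HasDerivWithinAt f (f' u) (Icc a b) u)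
    (hbd : ∀ u ∈ Icc a b, |f' u - c| ≤ ε) :
    |f b - f a - c * (b - a)| ≤ ε * (b - a) := by
  have key := norm_image_sub_le_of_norm_deriv_le_segment'
    (f := fun u => f u - c * u) (f' := fun u => f' u - c) (C := ε)
    (fun u hu => ((hf u hu).sub (by simpa using ((hasDerivAt_id u).const_mul c).hasDerivWithinAt (s := Icc a b))))
    (fun u hu => by simpa using hbd u (Ico_subset_Icc_self hu))
    b (right_mem_Icc.mpr hab)
  simp only [Real.norm_eq_abs] at key
  calc |f b - f a - c * (b - a)| = |(f b - c * b) - (f a - c * a)| := by ring_nf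
    _ ≤ ε * (b - a) := key

lemma mvt_bound {f f' : ℝ → ℝ} {a b c ε : ℝ}
    (hf : ∀ u ∈ Icc (min a b) (max a b), HasDerivWithinAt f (f' u) (Icc (min a b) (max a b)) u)
    (hbd : ∀ u ∈ Icc (min a b) (max a b), |f' u - c| ≤ ε) :
    |f b - f a - c * (b - a)| ≤ ε * |b - a| := by
  rcases le_total a b with hab | hab
  · rw [min_eq_left hab, max_eq_right hab] at hf hbd
    rw [abs_of_nonneg (by linarith : (0:ℝ) ≤ b - a)]
    exact mvt_bound_le hab hf hbd
  · rw [min_eq_right hab, max_eq_left hab] at hf hbd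
    have := mvt_bound_le hab hf hbd
    rw [abs_of_nonpos (by linarith : b - a ≤ 0)]
    calc |f b - f a - c * (b - a)| = |f a - f b - c * (a - b)| := by
          rw [← abs_neg]; ring_nf
      _ ≤ ε * (a - b) := this
      _ = ε * -(b - a) := by ring

set_option maxHeartbeats 2000000 in
lemma characteristic (q2 : ℝ) (hq2 : 0 < q2) (β βx βt : ℝ → ℝ → ℝ)
    (hβc : ContinuousOn (fun p : ℝ × ℝ => β p.1 p.2) (Icc 0 1 ×ˢ Ici 0))
    (hβx : ∀ x ∈ Icc (0:ℝ) 1, ∀ t ∈ Ici (0:ℝ),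
      HasDerivWithinAt (fun x' => β x' t) (βx x t) (Icc 0 1) x)
    (hβt : ∀ x ∈ Icc (0:ℝ) 1, ∀ t ∈ Ici (0:ℝ),
      HasDerivWithinAt (fun t' => β x t') (βt x t) (Ici 0) t)
    (hβxc : ContinuousOn (fun p : ℝ × ℝ => βx p.1 p.2) (Icc 0 1 ×ˢ Ici 0))
    (hβtc : ContinuousOn (fun p : ℝ × ℝ => βt p.1 p.2) (Icc 0 1 ×ˢ Ici 0))
    (hPDE : ∀ x ∈ Icc (0:ℝ) 1, ∀ t ∈ Ici (0:ℝ), βt x t = q2 * βx x t) :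
    ∀ x0 ∈ Icc (0:ℝ) 1, ∀ t0 : ℝ, 1 / q2 ≤ t0 →
      β x0 t0 = β 1 (t0 - (1 - x0) / q2) := by
  intro x0 hx0 t0 ht0
  set L := (1 - x0) / q2 with hLdef
  have hL0 : 0 ≤ L := div_nonneg (by linarith [hx0.2]) hq2.le
  have hLle : L ≤ 1 / q2 := by
    rw [hLdef]; gcongr; linarith [hx0.1]
  set S : Set (ℝ × ℝ) := Icc (0:ℝ) 1 ×ˢ Ici (0:ℝ) with hS
  set φ : ℝ → ℝ := fun s => β (x0 + q2 * s) (t0 - s) with hφ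
  have ht00 : (0:ℝ) ≤ t0 := le_trans (by positivity) ht0
  have hmem : ∀ s ∈ Icc (0:ℝ) L, (x0 + q2 * s) ∈ Icc (0:ℝ) 1 ∧ (0:ℝ) ≤ t0 - s := by
    intro s hs
    have h1 : q2 * s ≤ q2 * L := by nlinarith [hs.2]
    have h2 : q2 * L = 1 - x0 := by rw [hLdef]; field_simp
    refine ⟨⟨by nlinarith [hx0.1, hs.1], by nlinarith⟩, by linarith [hs.2, hLle, ht0]⟩
  have hcurve : ∀ s ∈ Icc (0:ℝ) L, ((x0 + q2 * s, t0 - s) : ℝ × ℝ) ∈ S := by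
    intro s hs; exact ⟨(hmem s hs).1, (hmem s hs).2⟩
  have hφc : ContinuousOn φ (Icc 0 L) := by
    have hc : Continuous (fun s : ℝ => ((x0 + q2 * s, t0 - s) : ℝ × ℝ)) := by continuity
    exact hβc.comp hc.continuousOn hcurve
  -- derivative of φ is 0 within Icc 0 L
  have hφd : ∀ s ∈ Icc (0:ℝ) L, HasDerivWithinAt φ 0 (Icc 0 L) s := by
    intro s hs
    set x := x0 + q2 * s with hx
    set t := t0 - s with ht
    have hxS : x ∈ Icc (0:ℝ) 1 := (hmem s hs).1
    have htS : t ∈ Ici (0:ℝ) := (hmem s hs).2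
    have hpS : ((x, t) : ℝ × ℝ) ∈ S := ⟨hxS, htS⟩
    rw [hasDerivWithinAt_iff_tendsto_slope]
    rw [Metric.tendsto_nhds]
    intro ε0 hε0
    set ε := ε0 / (q2 + 2) with hε
    have hεpos : 0 < ε := by positivity
    obtain ⟨δ1, hδ1, H1⟩ := Metric.continuousWithinAt_iff.mp (hβxc (x, t) hpS) ε hεpos
    obtain ⟨δ2, hδ2, H2⟩ := Metric.continuousWithinAt_iff.mp (hβtc (x, t) hpS) ε hεpos
    set δ := min δ1 δ2 with hδ
    have hδpos : 0 < δ := lt_min hδ1 hδ2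
    set η := δ / (q2 + 1) with hη
    have hηpos : 0 < η := by positivity
    have hq2η : q2 * η ≤ δ := by
      rw [hη, mul_div_assoc', div_le_iff₀ (by linarith : (0:ℝ) < q2 + 1)]
      nlinarith [hδpos.le]
    have hηδ : η ≤ δ := by
      rw [hη]; exact div_le_self hδpos.le (by linarith)
    have key : ∀ s' ∈ Icc (0:ℝ) L \ {s}, |s' - s| < η → |slope φ s s'| < ε0 := by
      intro s' hs' hnear
      have hs'I : s' ∈ Icc (0:ℝ) L := hs'.1
      have hne : s' ≠ s := hs'.2
      set x' := x0 + q2 * s' with hx'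
      set t' := t0 - s' with ht'
      have hx'S : x' ∈ Icc (0:ℝ) 1 := (hmem s' hs'I).1
      have ht'S : t' ∈ Ici (0:ℝ) := (hmem s' hs'I).2
      have hxx' : |x' - x| = q2 * |s' - s| := by
        rw [hx', hx]
        rw [show x0 + q2 * s' - (x0 + q2 * s) = q2 * (s' - s) by ring,
          abs_mul, abs_of_pos hq2]
      have htt' : |t' - t| = |s' - s| := by
        rw [ht', ht, show t0 - s' - (t0 - s) = -(s' - s) by ring, abs_neg]
      -- bound A : x-direction
      have hA : |β x' t' - β x t' - βx x t * (x' - x)| ≤ ε * |x' - x| := by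
        refine mvt_bound (f := fun v => β v t') (f' := fun v => βx v t')
          (a := x) (b := x') (c := βx x t) (ε := ε) ?_ ?_
        · intro v hv
          have hsub : Icc (min x x') (max x x') ⊆ Icc (0:ℝ) 1 := by
            apply Icc_subset_Icc
            · exact le_min hxS.1 hx'S.1
            · exact max_le hxS.2 hx'S.2
          exact (hβx v (hsub hv) t' ht'S).mono hsub
        · intro v hv
          have hvI : v ∈ Icc (0:ℝ) 1 := by
            refine ⟨le_trans (le_min hxS.1 hx'S.1) hv.1, le_trans hv.2 (max_le hxS.2 hx'S.2)⟩
          have hvx : |v - x| ≤ |x' - x| := by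
            rcases le_total x x' with hh | hh
            · rw [min_eq_left hh, max_eq_right hh] at hv
              rw [abs_of_nonneg (by linarith [hv.1]), abs_of_nonneg (by linarith)]
              linarith [hv.2]
            · rw [min_eq_right hh, max_eq_left hh] at hv
              rw [abs_of_nonpos (by linarith [hv.2]), abs_of_nonpos (by linarith)]
              linarith [hv.1]
          have hdist : dist ((v, t') : ℝ × ℝ) (x, t) < δ1 := by
            rw [Prod.dist_eq]
            apply max_lt
            · rw [Real.dist_eq]
              calc |v - x| ≤ q2 * |s' - s| := hvx.trans_eq hxx'
                _ < q2 * η := by apply mul_lt_mul_of_pos_left hnear hq2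
                _ ≤ δ := hq2η
                _ ≤ δ1 := min_le_left _ _
            · rw [Real.dist_eq]
              calc |t' - t| = |s' - s| := htt'
                _ < η := hnear
                _ ≤ δ := hηδ
                _ ≤ δ1 := min_le_left _ _
          have := H1 ⟨hvI, ht'S⟩ hdist
          rw [Real.dist_eq] at this
          exact this.le
      -- bound B : t-direction
      have hB : |β x t' - β x t - βt x t * (t' - t)| ≤ ε * |t' - t| := by
        refine mvt_bound (f := fun u => β x u) (f' := fun u => βt x u)
          (a := t) (b := t') (c := βt x t) (ε := ε) ?_ ?_
        · intro u hu
          have hsub : Icc (min t t') (max t t') ⊆ Ici (0:ℝ) := by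
            intro z hz; exact le_trans (le_min htS ht'S) hz.1
          exact (hβt x hxS u (hsub hu)).mono hsub
        · intro u hu
          have huI : u ∈ Ici (0:ℝ) := le_trans (le_min htS ht'S) hu.1
          have hut : |u - t| ≤ |t' - t| := by
            rcases le_total t t' with hh | hh
            · rw [min_eq_left hh, max_eq_right hh] at hu
              rw [abs_of_nonneg (by linarith [hu.1]), abs_of_nonneg (by linarith)]
              linarith [hu.2]
            · rw [min_eq_right hh, max_eq_left hh] at hu
              rw [abs_of_nonpos (by linarith [hu.2]), abs_of_nonpos (by linarith)]
              linarith [hu.1]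
          have hdist : dist ((x, u) : ℝ × ℝ) (x, t) < δ2 := by
            rw [Prod.dist_eq]
            apply max_lt
            · simpa [Real.dist_eq] using hδ2
            · rw [Real.dist_eq]
              calc |u - t| ≤ |t' - t| := hut
                _ = |s' - s| := htt'
                _ < η := hnear
                _ ≤ δ := hηδ
                _ ≤ δ2 := min_le_right _ _
          have := H2 ⟨hxS, huI⟩ hdist
          rw [Real.dist_eq] at this
          exact this.le
      have hφs' : φ s' = β x' t' := rfl
      have hφs : φ s = β x t := rfl
      have hzero : βx x t * (x' - x) + βt x t * (t' - t) = 0 := by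
        rw [hPDE x hxS t htS, hx', hx, ht', ht]; ring
      have hsum : |φ s' - φ s| ≤ ε * (q2 + 1) * |s' - s| := by
        calc |φ s' - φ s|
            = |(β x' t' - β x t' - βx x t * (x' - x))
                + (β x t' - β x t - βt x t * (t' - t))| := by
              rw [hφs', hφs]; congr 1; linarith [hzero]
          _ ≤ |β x' t' - β x t' - βx x t * (x' - x)|
                + |β x t' - β x t - βt x t * (t' - t)| := abs_add_le _ _
          _ ≤ ε * |x' - x| + ε * |t' - t| := add_le_add hA hB
          _ = ε * (q2 + 1) * |s' - s| := by rw [hxx', htt']; ring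
      have hss : 0 < |s' - s| := abs_pos.mpr (sub_ne_zero.mpr hne)
      have hsl : |slope φ s s'| ≤ ε * (q2 + 1) := by
        rw [slope_def_field, abs_div, div_le_iff₀ hss]
        calc |φ s' - φ s| ≤ ε * (q2 + 1) * |s' - s| := hsum
          _ = ε * (q2 + 1) * |s' - s| := rfl
      have hlt : ε * (q2 + 1) < ε0 := by
        rw [hε, div_mul_eq_mul_div, div_lt_iff₀ (by linarith : (0:ℝ) < q2 + 2)]
        nlinarith
      exact lt_of_le_of_lt hsl hlt
    have hball : {s' | |s' - s| < η} ∈ 𝓝[Icc (0:ℝ) L \ {s}] s := by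
      apply nhdsWithin_le_nhds
      simpa [Metric.ball, Real.dist_eq] using Metric.ball_mem_nhds s hηpos
    filter_upwards [hball, self_mem_nhdsWithin] with s' h1 h2
    rw [Real.dist_eq, sub_zero]
    exact key s' h2 h1
  -- φ is constant on [0, L]
  have hright : ∀ s ∈ Ico (0:ℝ) L, HasDerivWithinAt φ 0 (Ici s) s := by
    intro s hs
    have h1 : HasDerivWithinAt φ 0 (Icc s L) s :=
      (hφd s (Ico_subset_Icc_self hs)).mono (Icc_subset_Icc hs.1 le_rfl)
    exact h1.mono_of_mem_nhdsWithin (Icc_mem_nhdsGE_of_mem ⟨le_rfl, hs.2⟩)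
  have hconst := constant_of_has_deriv_right_zero hφc hright L (right_mem_Icc.mpr hL0)
  have hφ0 : φ 0 = β x0 t0 := by show β (x0 + q2 * 0) (t0 - 0) = _; norm_num
  have hφL : φ L = β 1 (t0 - L) := by
    show β (x0 + q2 * L) (t0 - L) = β 1 (t0 - L)
    have : x0 + q2 * L = 1 := by rw [hLdef]; field_simp; ring
    rw [this]
  calc β x0 t0 = φ 0 := hφ0.symm
    _ = φ L := hconst.symm
    _ = β 1 (t0 - L) := hφL

/-- Structural core of property 1 (safety) of Theorem 1:
the proximal ODE chain `h`, the transport PDE barrier `β` with `β(1,t) = h_1(t)`,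
and the distal ODE chain `Z` driven by `b·β(0,t)` are cascaded; positive
initialization propagates to nonnegativity of all barrier functions. -/
theorem cascade_safety
    (m n : ℕ) (hm : 1 ≤ m) (hn : 1 ≤ n)
    (q2 b : ℝ) (hq2 : 0 < q2) (hb : 0 < b)
    (c : ℕ → ℝ) (hc : ∀ i, 1 ≤ i → i ≤ m → 0 < c i)
    (κ : ℕ → ℝ) (hκ : ∀ j, 1 ≤ j → j ≤ n → 0 < κ j)
    (h : ℝ → ℕ → ℝ) (β βx βt : ℝ → ℝ → ℝ) (Z : ℝ → ℕ → ℝ)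
    -- (i) the proximal ODE chain:
    (hode : ∀ i, 1 ≤ i → i ≤ m - 1 → ∀ t, 0 ≤ t →
      HasDerivAt (fun s => h s i) (-c i * h t i + h t (i + 1)) t)
    (hodem : ∀ t, 0 ≤ t → HasDerivAt (fun s => h s m) (-c m * h t m) t)
    -- (ii) the transport PDE, continuously differentiable, with β(1,t) = h_1(t):
    (hβc : ContinuousOn (fun p : ℝ × ℝ => β p.1 p.2) (Icc 0 1 ×ˢ Ici 0))
    (hβx : ∀ x ∈ Icc (0:ℝ) 1, ∀ t ∈ Ici (0:ℝ),
      HasDerivWithinAt (fun x' => β x' t) (βx x t) (Icc 0 1) x)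
    (hβt : ∀ x ∈ Icc (0:ℝ) 1, ∀ t ∈ Ici (0:ℝ),
      HasDerivWithinAt (fun t' => β x t') (βt x t) (Ici 0) t)
    (hβxc : ContinuousOn (fun p : ℝ × ℝ => βx p.1 p.2) (Icc 0 1 ×ˢ Ici 0))
    (hβtc : ContinuousOn (fun p : ℝ × ℝ => βt p.1 p.2) (Icc 0 1 ×ˢ Ici 0))
    (hPDE : ∀ x ∈ Icc (0:ℝ) 1, ∀ t ∈ Ici (0:ℝ), βt x t = q2 * βx x t)
    (hBC : ∀ t ∈ Ici (0:ℝ), β 1 t = h t 1)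
    -- (iii) the distal ODE chain driven by b·β(0,t):
    (hZode : ∀ j, 1 ≤ j → j ≤ n - 1 → ∀ t, 0 ≤ t →
      HasDerivAt (fun s => Z s j) (-κ j * Z t j + Z t (j + 1)) t)
    (hZoden : ∀ t, 0 ≤ t →
      HasDerivAt (fun s => Z s n) (-κ n * Z t n + b * β 0 t) t)
    -- positive initialization:
    (h0 : ∀ i, 1 ≤ i → i ≤ m → 0 < h 0 i)
    (hZ0 : ∀ j, 1 ≤ j → j ≤ n → 0 < Z (1 / q2) j) :
    (∀ i, 1 ≤ i → i ≤ m → ∀ t, 0 ≤ t → 0 ≤ h t i) ∧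
    (∀ x ∈ Icc (0:ℝ) 1, ∀ t, 1 / q2 ≤ t → 0 ≤ β x t) ∧
    (∀ j, 1 ≤ j → j ≤ n → ∀ t, 1 / q2 ≤ t → 0 ≤ Z t j) ∧
    (∀ t, 1 / q2 ≤ t → 0 ≤ Z t 1) := by
  -- Step 1: the proximal chain is nonnegative, by downward induction.
  have hchain : ∀ k i, 1 ≤ i → i ≤ m → m - i ≤ k → ∀ t, 0 ≤ t → 0 ≤ h t i := by
    intro k
    induction k with
    | zero =>
      intro i h1 h2 h3
      have him : i = m := by omega
      subst him
      exact ode_nonneg (c i) 0 (fun t => h t i) (fun _ => 0)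
        (fun t ht => by simpa using hodem t ht) (fun _ _ => le_rfl) (h0 i h1 h2).le
    | succ k ih =>
      intro i h1 h2 h3
      by_cases him : i = m
      · subst him
        exact ode_nonneg (c i) 0 (fun t => h t i) (fun _ => 0)
          (fun t ht => by simpa using hodem t ht) (fun _ _ => le_rfl) (h0 i h1 h2).le
      · exact ode_nonneg (c i) 0 (fun t => h t i) (fun t => h t (i + 1))
          (fun t ht => hode i h1 (by omega) t ht)
          (fun t ht => ih (i + 1) (by omega) (by omega) (by omega) t ht)
          (h0 i h1 h2).le
  have hhn : ∀ i, 1 ≤ i → i ≤ m → ∀ t, 0 ≤ t → 0 ≤ h t i :=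
    fun i h1 h2 => hchain (m - i) i h1 h2 le_rfl
  -- Step 2: the PDE barrier is nonnegative for t ≥ 1/q2.
  have hq2inv : 0 < 1 / q2 := by positivity
  have hβn : ∀ x ∈ Icc (0:ℝ) 1, ∀ t, 1 / q2 ≤ t → 0 ≤ β x t := by
    intro x hx t ht
    rw [characteristic q2 hq2 β βx βt hβc hβx hβt hβxc hβtc hPDE x hx t ht]
    have hL : (1 - x) / q2 ≤ 1 / q2 := by gcongr; linarith [hx.1]
    have htpos : (0:ℝ) ≤ t - (1 - x) / q2 := by linarith
    rw [hBC _ htpos]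
    exact hhn 1 le_rfl hm _ htpos
  -- Step 3: the distal chain is nonnegative for t ≥ 1/q2.
  have hT0 : ∀ t : ℝ, 1 / q2 ≤ t → (0:ℝ) ≤ t := fun t ht => le_trans hq2inv.le ht
  have hZchain : ∀ k j, 1 ≤ j → j ≤ n → n - j ≤ k → ∀ t, 1 / q2 ≤ t → 0 ≤ Z t j := by
    intro k
    induction k with
    | zero =>
      intro j h1 h2 h3
      have hjn : j = n := by omega
      subst hjn
      exact ode_nonneg (κ j) (1 / q2) (fun t => Z t j) (fun t => b * β 0 t)
        (fun t ht => hZoden t (hT0 t ht))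
        (fun t ht => mul_nonneg hb.le (hβn 0 ⟨le_rfl, zero_le_one⟩ t ht))
        (hZ0 j h1 h2).le
    | succ k ih =>
      intro j h1 h2 h3
      by_cases hjn : j = n
      · subst hjn
        exact ode_nonneg (κ j) (1 / q2) (fun t => Z t j) (fun t => b * β 0 t)
          (fun t ht => hZoden t (hT0 t ht))
          (fun t ht => mul_nonneg hb.le (hβn 0 ⟨le_rfl, zero_le_one⟩ t ht))
          (hZ0 j h1 h2).le
      · exact ode_nonneg (κ j) (1 / q2) (fun t => Z t j) (fun t => Z t (j + 1))
          (fun t ht => hZode j h1 (by omega) t (hT0 t ht))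
          (fun t ht => ih (j + 1) (by omega) (by omega) (by omega) t ht)
          (hZ0 j h1 h2).le
  have hZn : ∀ j, 1 ≤ j → j ≤ n → ∀ t, 1 / q2 ≤ t → 0 ≤ Z t j :=
    fun j h1 h2 => hZchain (n - j) j h1 h2 le_rfl
  exact ⟨hhn, hβn, hZn, fun t ht => hZn 1 le_rfl hn t ht⟩
end

section
/- Let m, n ≥ 1 be integers, let q1, q2, b > 0, p ∈ ℝ, let κ_1, …, κ_n > 0, and let c_1, …, c_m satisfy c_i > 2 for 1 ≤ i ≤ m−1 and c_m > 1. Let A_Z be the n×n matrix with −κ_j in the (j,j) entries, 1 in the (j,j+1) entries, and zeros elsewhere, and B = (0,…,0,b)ᵀ ∈ ℝⁿ. Suppose Z : [0,∞) → ℝⁿ, α, β : [0,1] × [0,∞) → ℝ and h = (h_1,…,h_m) : [0,∞) → ℝ^m are continuously differentiable and satisfy, for all t ≥ 0 and x ∈ [0,1]: Ż(t) = A_Z Z(t) + B β(0,t); ∂t α(x,t) = −q1 ∂x α(x,t); ∂t β(x,t) = q2 ∂x β(x,t); α(0,t) = p β(0,t); β(1,t) = h_1(t); h_i'(t) = −c_i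 h_i(t) + h_{i+1}(t) for 1 ≤ i ≤ m−1; and h_m'(t) = −c_m h_m(t). Then there exist constants Υ ≥ 1 and σ0 > 0, depending only on m, n, q1, q2, p, b, the c_i and the κ_j (and not on the particular solution), such that Ξ(t) ≤ Υ Ξ(0) e^{−σ0 t} for all t ≥ 0, where Ξ(t) = ∫₀¹ β(x,t)² dx + ∫₀¹ α(x,t)² dx + Σ_{i=1}^{m} h_i(t)² + |Z(t)|². -/
open Set

open MeasureTheory

namespace TargetAux

/-- x-slice continuity from joint continuity. -/
lemma sliceCont_x {G : ℝ → ℝ → ℝ}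
    (hG : ContinuousOn (fun q : ℝ × ℝ => G q.1 q.2) (Icc 0 1 ×ˢ Ici 0))
    {t : ℝ} (ht : t ∈ Ici (0:ℝ)) :
    ContinuousOn (fun x => G x t) (Icc 0 1) := by
  exact hG.comp ((continuous_id.prodMk continuous_const).continuousOn)
    (fun y hy => Set.mk_mem_prod hy ht)

/-- t-slice continuity from joint continuity. -/
lemma sliceCont_t {G : ℝ → ℝ → ℝ}
    (hG : ContinuousOn (fun q : ℝ × ℝ => G q.1 q.2) (Icc 0 1 ×ˢ Ici 0))
    {x : ℝ} (hx : x ∈ Icc (0:ℝ) 1) :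
    ContinuousOn (fun t => G x t) (Ici 0) := by
  exact hG.comp ((continuous_const.prodMk continuous_id).continuousOn)
    (fun s hs => Set.mk_mem_prod hx hs)

/-- Differentiation under the integral sign at an interior time. -/
lemma param_hasDerivAt {G Gt : ℝ → ℝ → ℝ}
    (hG : ContinuousOn (fun q : ℝ × ℝ => G q.1 q.2) (Icc 0 1 ×ˢ Ici 0))
    (hGt : ContinuousOn (fun q : ℝ × ℝ => Gt q.1 q.2) (Icc 0 1 ×ˢ Ici 0))
    (hd : ∀ x ∈ Icc (0:ℝ) 1, ∀ t ∈ Ici (0:ℝ),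
      HasDerivWithinAt (fun t' => G x t') (Gt x t) (Ici 0) t)
    {t₀ : ℝ} (ht₀ : 0 < t₀) :
    HasDerivAt (fun t => ∫ x in (0:ℝ)..1, G x t) (∫ x in (0:ℝ)..1, Gt x t₀) t₀ := by
  have hK : IsCompact (Icc (0:ℝ) 1 ×ˢ Icc (t₀/2) (t₀+t₀/2)) :=
    isCompact_Icc.prod isCompact_Icc
  have hKsub : (Icc (0:ℝ) 1 ×ˢ Icc (t₀/2) (t₀+t₀/2)) ⊆ (Icc 0 1 ×ˢ Ici 0) := by
    intro q hq
    exact ⟨hq.1, le_trans (by positivity) hq.2.1⟩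
  obtain ⟨C, hC⟩ := hK.exists_bound_of_continuousOn (hGt.mono hKsub)
  have hball : ∀ t ∈ Metric.ball t₀ (t₀/2), t ∈ Icc (t₀/2) (t₀+t₀/2) := by
    intro t htb
    rw [Metric.mem_ball, Real.dist_eq] at htb
    constructor <;> [linarith [abs_lt.1 htb]; linarith [abs_lt.1 htb]]
  have hballpos : ∀ t ∈ Metric.ball t₀ (t₀/2), (0:ℝ) < t := by
    intro t htb; have := (hball t htb).1; linarith
  have hIoc : Set.uIoc (0:ℝ) 1 = Ioc 0 1 := uIoc_of_le (by norm_num)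
  have key := intervalIntegral.hasDerivAt_integral_of_dominated_loc_of_deriv_le
    (F := fun t x => G x t) (F' := fun t x => Gt x t) (x₀ := t₀)
    (a := (0:ℝ)) (b := 1) (μ := volume) (bound := fun _ => C)
    (Metric.ball_mem_nhds t₀ (half_pos ht₀))
    ?_ ?_ ?_ ?_ (intervalIntegrable_const) ?_
  · exact key.2
  · filter_upwards [Metric.ball_mem_nhds t₀ (half_pos ht₀)] with t htb
    rw [hIoc]
    exact ((sliceCont_x hG (le_of_lt (hballpos t htb))).mono Ioc_subset_Icc_self
      ).aestronglyMeasurable measurableSet_Ioc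
  · exact ((sliceCont_x hG (le_of_lt ht₀)).mono (by rw [uIcc_of_le (by norm_num : (0:ℝ) ≤ 1)])
      ).intervalIntegrable
  · rw [hIoc]
    exact ((sliceCont_x hGt (le_of_lt ht₀)).mono Ioc_subset_Icc_self
      ).aestronglyMeasurable measurableSet_Ioc
  · rw [hIoc]
    refine Filter.Eventually.of_forall (fun x hx t htb => ?_)
    exact hC (x, t) ⟨Ioc_subset_Icc_self hx, hball t htb⟩
  · rw [hIoc]
    refine Filter.Eventually.of_forall (fun x hx t htb => ?_)
    exact (hd x (Ioc_subset_Icc_self hx) t (le_of_lt (hballpos t htb))).hasDerivAt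
      (Filter.mem_of_superset (isOpen_Ioi.mem_nhds (hballpos t htb)) Ioi_subset_Ici_self)

/-- Continuity of the parametric integral on `Ici 0`. -/
lemma param_continuousOn {G : ℝ → ℝ → ℝ}
    (hG : ContinuousOn (fun q : ℝ × ℝ => G q.1 q.2) (Icc 0 1 ×ˢ Ici 0)) :
    ContinuousOn (fun t => ∫ x in (0:ℝ)..1, G x t) (Ici 0) := by
  intro t₀ ht₀
  have hK : IsCompact (Icc (0:ℝ) 1 ×ˢ Icc 0 (t₀+1)) := isCompact_Icc.prod isCompact_Icc
  have hKsub : (Icc (0:ℝ) 1 ×ˢ Icc 0 (t₀+1)) ⊆ (Icc 0 1 ×ˢ Ici 0) :=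
    fun q hq => ⟨hq.1, hq.2.1⟩
  obtain ⟨C, hC⟩ := hK.exists_bound_of_continuousOn (hG.mono hKsub)
  have hIoc : Set.uIoc (0:ℝ) 1 = Ioc 0 1 := uIoc_of_le (by norm_num)
  have hmem : Icc 0 (t₀+1) ∈ nhdsWithin t₀ (Ici 0) := by
    have := Filter.inter_mem (nhdsWithin_le_nhds (Iic_mem_nhds (by linarith : t₀ < t₀+1)))
      (self_mem_nhdsWithin (a := t₀) (s := Ici (0:ℝ)))
    refine Filter.mem_of_superset this ?_
    rintro t ⟨h1, h2⟩; exact ⟨h2, h1⟩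
  refine intervalIntegral.continuousWithinAt_of_dominated_interval
    (bound := fun _ => C) ?_ ?_ intervalIntegrable_const ?_
  · filter_upwards [hmem] with t htm
    rw [hIoc]
    exact ((sliceCont_x hG htm.1).mono Ioc_subset_Icc_self).aestronglyMeasurable
      measurableSet_Ioc
  · filter_upwards [hmem] with t htm
    refine Filter.Eventually.of_forall (fun x hx => ?_)
    rw [hIoc] at hx
    exact hC (x, t) ⟨Ioc_subset_Icc_self hx, htm⟩
  · refine Filter.Eventually.of_forall (fun x hx => ?_)
    rw [hIoc] at hx
    exact (sliceCont_t hG (Ioc_subset_Icc_self hx)) t₀ ht₀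

/-- Integration by parts / FTC step for the weighted transport energy:
`∫₀¹ e^{wx}·2 f f' = e^w f(1)² − f(0)² − w ∫₀¹ e^{wx} f²`. -/
lemma ibp_exp {f fx : ℝ → ℝ} (w : ℝ)
    (hf : ContinuousOn f (Icc 0 1)) (hfx : ContinuousOn fx (Icc 0 1))
    (hd : ∀ x ∈ Icc (0:ℝ) 1, HasDerivWithinAt f (fx x) (Icc 0 1) x) :
    ∫ x in (0:ℝ)..1, Real.exp (w*x) * (2 * f x * fx x)
      = Real.exp w * f 1 ^ 2 - f 0 ^ 2 - w * ∫ x in (0:ℝ)..1, Real.exp (w*x) * f x ^ 2 := by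
  have hucc : Set.uIcc (0:ℝ) 1 = Icc 0 1 := uIcc_of_le (by norm_num)
  have hcontw : ContinuousOn (fun x => Real.exp (w*x)) (Icc (0:ℝ) 1) :=
    (Real.continuous_exp.comp (continuous_const.mul continuous_id)).continuousOn
  have hint1 : IntervalIntegrable (fun x => Real.exp (w*x) * f x ^ 2) volume 0 1 := by
    apply ContinuousOn.intervalIntegrable
    rw [hucc]; exact hcontw.mul (hf.pow 2)
  have hint2 : IntervalIntegrable (fun x => Real.exp (w*x) * (2 * f x * fx x)) volume 0 1 := by
    apply ContinuousOn.intervalIntegrable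
    rw [hucc]; exact hcontw.mul ((continuousOn_const.mul hf).mul hfx)
  have hftc : ∫ x in (0:ℝ)..1,
      (w * (Real.exp (w*x) * f x ^ 2) + Real.exp (w*x) * (2 * f x * fx x))
      = Real.exp (w*1) * f 1 ^ 2 - Real.exp (w*0) * f 0 ^ 2 := by
    refine intervalIntegral.integral_eq_sub_of_hasDeriv_right_of_le
      (f := fun x => Real.exp (w*x) * f x ^ 2) (by norm_num) ?_ ?_ ?_
    · exact hcontw.mul (hf.pow 2)
    · intro x hx
      have hmem : Icc (0:ℝ) 1 ∈ nhds x := by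
        refine Filter.mem_of_superset (isOpen_Ioo.mem_nhds hx) Ioo_subset_Icc_self
      have hder : HasDerivAt (fun x => Real.exp (w*x) * f x ^ 2)
          (w * (Real.exp (w*x) * f x ^ 2) + Real.exp (w*x) * (2 * f x * fx x)) x := by
        have h1 : HasDerivAt (fun x => Real.exp (w*x)) (w * Real.exp (w*x)) x := by
          simpa [mul_comm, Function.comp_def] using (Real.hasDerivAt_exp (w*x)).comp x
            ((hasDerivAt_id x).const_mul w)
        have h2 : HasDerivAt f (fx x) x :=
          (hd x (Ioo_subset_Icc_self hx)).hasDerivAt hmem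
        have := h1.fun_mul (h2.fun_pow 2)
        refine this.congr_deriv ?_
        ring
      exact hder.hasDerivWithinAt
    · apply ContinuousOn.intervalIntegrable
      rw [hucc]
      exact (continuousOn_const.mul (hcontw.mul (hf.pow 2))).add
        (hcontw.mul ((continuousOn_const.mul hf).mul hfx))
  have hsplit : ∫ x in (0:ℝ)..1,
      (w * (Real.exp (w*x) * f x ^ 2) + Real.exp (w*x) * (2 * f x * fx x))
      = w * (∫ x in (0:ℝ)..1, Real.exp (w*x) * f x ^ 2)
        + ∫ x in (0:ℝ)..1, Real.exp (w*x) * (2 * f x * fx x) := by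
    rw [intervalIntegral.integral_add (hint1.const_mul w) hint2,
      intervalIntegral.integral_const_mul]
  rw [hsplit] at hftc
  simp only [mul_one, mul_zero, Real.exp_zero, one_mul] at hftc
  linarith


lemma hchain_bound (m : ℕ) (hm : 1 ≤ m) (c : ℕ → ℝ)
    (hc : ∀ i, 1 ≤ i → i ≤ m - 1 → 2 < c i) (hcm : 1 < c m)
    (u D : ℕ → ℝ)
    (hD : ∀ i, 1 ≤ i → i ≤ m - 1 → D i = -c i * u i + u (i + 1))
    (hDm : D m = -c m * u m) :
    ∑ i ∈ Finset.Icc 1 m, 2 * u i * D i ≤ -∑ i ∈ Finset.Icc 1 m, u i ^ 2 := by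
  obtain ⟨m', rfl⟩ : ∃ m', m = m' + 1 := ⟨m - 1, (Nat.succ_pred_eq_of_pos hm).symm⟩
  rw [Finset.sum_Icc_succ_top (Nat.le_add_left 1 m'), Finset.sum_Icc_succ_top (Nat.le_add_left 1 m')]
  have h1 : ∑ i ∈ Finset.Icc 1 m', 2 * u i * D i
      ≤ ∑ i ∈ Finset.Icc 1 m', (-3 * u i ^ 2 + u (i + 1) ^ 2) := by
    refine Finset.sum_le_sum (fun i hi => ?_)
    obtain ⟨hi1, hi2⟩ := Finset.mem_Icc.1 hi
    rw [hD i hi1 (by omega)]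
    have hci := hc i hi1 (by omega)
    nlinarith [sq_nonneg (u i - u (i + 1)),
      mul_nonneg (by linarith : (0:ℝ) ≤ 2 * c i - 4) (sq_nonneg (u i))]
  have h2 : ∑ i ∈ Finset.Icc 1 m', (-3 * u i ^ 2 + u (i + 1) ^ 2)
      = -3 * (∑ i ∈ Finset.Icc 1 m', u i ^ 2) + ∑ i ∈ Finset.Icc 2 (m' + 1), u i ^ 2 := by
    rw [Finset.sum_add_distrib, ← Finset.mul_sum]
    congr 1
    rw [show (2:ℕ) = 1 + 1 from rfl, ← Finset.map_add_right_Icc, Finset.sum_map]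
    simp [addRightEmbedding]
  have h3 : ∑ i ∈ Finset.Icc 2 (m' + 1), u i ^ 2
      ≤ (∑ i ∈ Finset.Icc 1 m', u i ^ 2) + u (m' + 1) ^ 2 := by
    rw [← Finset.sum_Icc_succ_top (Nat.le_add_left 1 m')]
    exact Finset.sum_le_sum_of_subset_of_nonneg
      (Finset.Icc_subset_Icc (by norm_num) le_rfl) (fun i _ _ => sq_nonneg _)
  have h4 : 2 * u (m' + 1) * D (m' + 1) ≤ -2 * u (m' + 1) ^ 2 := by
    rw [hDm]
    nlinarith [sq_nonneg (u (m' + 1)), hcm]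
  have h5 : (0:ℝ) ≤ ∑ i ∈ Finset.Icc 1 m', u i ^ 2 :=
    Finset.sum_nonneg (fun i _ => sq_nonneg _)
  linarith

lemma zchain_bound (n : ℕ) (hn : 1 ≤ n) (κ : ℕ → ℝ)
    (hκ : ∀ j, 1 ≤ j → j ≤ n → 0 < κ j)
    (d : ℕ → ℝ) (hdpos : ∀ j, 1 ≤ j → j ≤ n → 0 < d j)
    (hdrec : ∀ j, 1 ≤ j → j < n → d j = κ j * κ (j + 1) / 2 * d (j + 1))
    (hdn : d n = 1)
    (κmin : ℝ) (hκmin : ∀ j, 1 ≤ j → j ≤ n → κmin ≤ κ j)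
    (b v : ℝ) (u D : ℕ → ℝ)
    (hD : ∀ j, 1 ≤ j → j ≤ n - 1 → D j = -κ j * u j + u (j + 1))
    (hDn : D n = -κ n * u n + b * v) :
    ∑ j ∈ Finset.Icc 1 n, d j * (2 * u j * D j)
      ≤ -(κmin / 2) * ∑ j ∈ Finset.Icc 1 n, d j * u j ^ 2 + b ^ 2 / κ n * v ^ 2 := by
  obtain ⟨n', rfl⟩ : ∃ n', n = n' + 1 := ⟨n - 1, (Nat.succ_pred_eq_of_pos hn).symm⟩
  have hκn : 0 < κ (n' + 1) := hκ _ (Nat.le_add_left 1 n') le_rfl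
  have h1 : ∑ j ∈ Finset.Icc 1 n', d j * (2 * u j * D j)
      ≤ ∑ j ∈ Finset.Icc 1 n',
          (-(κ j * d j) * u j ^ 2 + κ (j + 1) * d (j + 1) / 2 * u (j + 1) ^ 2) := by
    refine Finset.sum_le_sum (fun j hj => ?_)
    obtain ⟨hj1, hj2⟩ := Finset.mem_Icc.1 hj
    have hjn : j < n' + 1 := by omega
    rw [hD j hj1 (by omega), hdrec j hj1 hjn]
    have hκj : 0 < κ j := hκ j hj1 (by omega)
    have hκj1 : 0 < κ (j + 1) := hκ (j + 1) (by omega) (by omega)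
    have hdj1 : 0 < d (j + 1) := hdpos (j + 1) (by omega) (by omega)
    nlinarith [mul_nonneg (mul_nonneg hκj1.le hdj1.le) (sq_nonneg (κ j * u j - u (j + 1)))]
  have h2 : ∑ j ∈ Finset.Icc 1 n', κ (j + 1) * d (j + 1) / 2 * u (j + 1) ^ 2
      = ∑ j ∈ Finset.Icc 2 (n' + 1), κ j * d j / 2 * u j ^ 2 := by
    rw [show (2:ℕ) = 1 + 1 from rfl, ← Finset.map_add_right_Icc, Finset.sum_map]
    simp [addRightEmbedding]
  have h3 : ∑ j ∈ Finset.Icc 2 (n' + 1), κ j * d j / 2 * u j ^ 2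
      ≤ ∑ j ∈ Finset.Icc 1 (n' + 1), κ j * d j / 2 * u j ^ 2 := by
    refine Finset.sum_le_sum_of_subset_of_nonneg
      (Finset.Icc_subset_Icc (by norm_num) le_rfl) (fun j hj _ => ?_)
    obtain ⟨hj1, hj2⟩ := Finset.mem_Icc.1 hj
    have hκj : 0 < κ j := hκ j hj1 hj2
    have hdj : 0 < d j := hdpos j hj1 hj2
    positivity
  have h4 : d (n' + 1) * (2 * u (n' + 1) * D (n' + 1))
      ≤ -(κ (n' + 1) * d (n' + 1)) * u (n' + 1) ^ 2 + b ^ 2 / κ (n' + 1) * v ^ 2 := by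
    rw [hDn, hdn]
    have e : b ^ 2 / κ (n' + 1) * κ (n' + 1) = b ^ 2 := div_mul_cancel₀ _ hκn.ne'
    nlinarith [sq_nonneg (κ (n' + 1) * u (n' + 1) - b * v), hκn, e]
  have h5 : (κmin / 2) * ∑ j ∈ Finset.Icc 1 (n' + 1), d j * u j ^ 2
      ≤ ∑ j ∈ Finset.Icc 1 (n' + 1), κ j * d j / 2 * u j ^ 2 := by
    rw [Finset.mul_sum]
    refine Finset.sum_le_sum (fun j hj => ?_)
    obtain ⟨hj1, hj2⟩ := Finset.mem_Icc.1 hj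
    have hdj : 0 < d j := hdpos j hj1 hj2
    have := hκmin j hj1 hj2
    nlinarith [sq_nonneg (u j), mul_nonneg hdj.le (sq_nonneg (u j))]
  have h1' : ∑ j ∈ Finset.Icc 1 n', d j * (2 * u j * D j)
      ≤ (∑ j ∈ Finset.Icc 1 n', -(κ j * d j) * u j ^ 2)
        + ∑ j ∈ Finset.Icc 2 (n' + 1), κ j * d j / 2 * u j ^ 2 := by
    rw [← h2, ← Finset.sum_add_distrib]; exact h1
  have e2 : ∑ j ∈ Finset.Icc 1 n', -(κ j * d j) * u j ^ 2
      = (-2) * ∑ j ∈ Finset.Icc 1 n', κ j * d j / 2 * u j ^ 2 := by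
    rw [Finset.mul_sum]; exact Finset.sum_congr rfl (fun j _ => by ring)
  have e1 : ∑ j ∈ Finset.Icc 1 (n' + 1), κ j * d j / 2 * u j ^ 2
      = (∑ j ∈ Finset.Icc 1 n', κ j * d j / 2 * u j ^ 2)
        + κ (n' + 1) * d (n' + 1) / 2 * u (n' + 1) ^ 2 :=
    Finset.sum_Icc_succ_top (Nat.le_add_left 1 n') _
  have e3 : ∑ j ∈ Finset.Icc 1 (n' + 1), d j * u j ^ 2
      = (∑ j ∈ Finset.Icc 1 n', d j * u j ^ 2) + d (n' + 1) * u (n' + 1) ^ 2 :=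
    Finset.sum_Icc_succ_top (Nat.le_add_left 1 n') _
  rw [e3] at h5
  rw [Finset.sum_Icc_succ_top (Nat.le_add_left 1 n'),
    Finset.sum_Icc_succ_top (Nat.le_add_left 1 n')]
  linarith


end TargetAux

open TargetAux

/-- The squared system norm `Ξ(t)` of the backstepping target system. -/
noncomputable def targetNorm (m n : ℕ) (α β : ℝ → ℝ → ℝ) (h Z : ℝ → ℕ → ℝ)
    (t : ℝ) : ℝ :=
  (∫ x in (0:ℝ)..1, β x t ^ 2) + (∫ x in (0:ℝ)..1, α x t ^ 2) +
    (∑ i ∈ Finset.Icc 1 m, h t i ^ 2) + (∑ j ∈ Finset.Icc 1 n, Z t j ^ 2)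

set_option maxHeartbeats 1000000 in
/-- Exponential stability of the backstepping target system:
distal chain `Ż = A_Z Z + B β(0,t)` (componentwise `Z_j' = -κ_j Z_j + Z_{j+1}`,
`Z_n' = -κ_n Z_n + b β(0,t)`), transport PDEs `α_t = -q1 α_x`, `β_t = q2 β_x`
with `α(0,t) = p β(0,t)`, `β(1,t) = h_1(t)`, and proximal chain
`h_i' = -c_i h_i + h_{i+1}`, `h_m' = -c_m h_m`.  There are constants `Υ ≥ 1`,
`σ0 > 0`, depending only on the parameters and not on the solution, with
`Ξ(t) ≤ Υ Ξ(0) e^{-σ0 t}`. -/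
theorem target_system_exponential_stability
    (m n : ℕ) (hm : 1 ≤ m) (hn : 1 ≤ n)
    (q1 q2 b : ℝ) (hq1 : 0 < q1) (hq2 : 0 < q2) (hb : 0 < b) (p : ℝ)
    (κ : ℕ → ℝ) (hκ : ∀ j, 1 ≤ j → j ≤ n → 0 < κ j)
    (c : ℕ → ℝ) (hc : ∀ i, 1 ≤ i → i ≤ m - 1 → 2 < c i) (hcm : 1 < c m) :
    ∃ Υ : ℝ, 1 ≤ Υ ∧ ∃ σ0 : ℝ, 0 < σ0 ∧
      ∀ (Z : ℝ → ℕ → ℝ) (α αx αt β βx βt : ℝ → ℝ → ℝ) (h : ℝ → ℕ → ℝ),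
        -- distal ODE Ż = A_Z Z + B β(0,t):
        (∀ j, 1 ≤ j → j ≤ n - 1 → ∀ t, 0 ≤ t →
          HasDerivAt (fun s => Z s j) (-κ j * Z t j + Z t (j + 1)) t) →
        (∀ t, 0 ≤ t →
          HasDerivAt (fun s => Z s n) (-κ n * Z t n + b * β 0 t) t) →
        -- α is continuously differentiable and satisfies α_t = -q1 α_x:
        ContinuousOn (fun q : ℝ × ℝ => α q.1 q.2) (Icc 0 1 ×ˢ Ici 0) →
        (∀ x ∈ Icc (0:ℝ) 1, ∀ t ∈ Ici (0:ℝ),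
          HasDerivWithinAt (fun x' => α x' t) (αx x t) (Icc 0 1) x) →
        (∀ x ∈ Icc (0:ℝ) 1, ∀ t ∈ Ici (0:ℝ),
          HasDerivWithinAt (fun t' => α x t') (αt x t) (Ici 0) t) →
        ContinuousOn (fun q : ℝ × ℝ => αx q.1 q.2) (Icc 0 1 ×ˢ Ici 0) →
        ContinuousOn (fun q : ℝ × ℝ => αt q.1 q.2) (Icc 0 1 ×ˢ Ici 0) →
        (∀ x ∈ Icc (0:ℝ) 1, ∀ t ∈ Ici (0:ℝ), αt x t = -q1 * αx x t) →
        -- β is continuously differentiable and satisfies β_t = q2 β_x: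
        ContinuousOn (fun q : ℝ × ℝ => β q.1 q.2) (Icc 0 1 ×ˢ Ici 0) →
        (∀ x ∈ Icc (0:ℝ) 1, ∀ t ∈ Ici (0:ℝ),
          HasDerivWithinAt (fun x' => β x' t) (βx x t) (Icc 0 1) x) →
        (∀ x ∈ Icc (0:ℝ) 1, ∀ t ∈ Ici (0:ℝ),
          HasDerivWithinAt (fun t' => β x t') (βt x t) (Ici 0) t) →
        ContinuousOn (fun q : ℝ × ℝ => βx q.1 q.2) (Icc 0 1 ×ˢ Ici 0) →
        ContinuousOn (fun q : ℝ × ℝ => βt q.1 q.2) (Icc 0 1 ×ˢ Ici 0) →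
        (∀ x ∈ Icc (0:ℝ) 1, ∀ t ∈ Ici (0:ℝ), βt x t = q2 * βx x t) →
        -- boundary conditions α(0,t) = p β(0,t), β(1,t) = h_1(t):
        (∀ t ∈ Ici (0:ℝ), α 0 t = p * β 0 t) →
        (∀ t ∈ Ici (0:ℝ), β 1 t = h t 1) →
        -- proximal ODE chain:
        (∀ i, 1 ≤ i → i ≤ m - 1 → ∀ t, 0 ≤ t →
          HasDerivAt (fun s => h s i) (-c i * h t i + h t (i + 1)) t) →
        (∀ t, 0 ≤ t → HasDerivAt (fun s => h s m) (-c m * h t m) t) →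
        ∀ t, 0 ≤ t →
          targetNorm m n α β h Z t ≤
            Υ * targetNorm m n α β h Z 0 * Real.exp (-σ0 * t) := by
  classical
  -- weights for the Z-chain
  set d : ℕ → ℝ := fun j => ∏ k ∈ Finset.Ico j n, (κ k * κ (k + 1) / 2) with hd_def
  have hdpos : ∀ j, 1 ≤ j → j ≤ n → 0 < d j := by
    intro j hj1 hj2
    refine Finset.prod_pos (fun k hk => ?_)
    obtain ⟨hk1, hk2⟩ := Finset.mem_Ico.1 hk
    have h1 := hκ k (le_trans hj1 hk1) (by omega)
    have h2 := hκ (k + 1) (by omega) (by omega)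
    positivity
  have hdrec : ∀ j, 1 ≤ j → j < n → d j = κ j * κ (j + 1) / 2 * d (j + 1) := by
    intro j hj1 hj2
    simp only [hd_def]
    rw [Finset.prod_eq_prod_Ico_succ_bot hj2]
  have hdn : d n = 1 := by simp [hd_def]
  have hne : (Finset.Icc 1 n).Nonempty := by rw [Finset.nonempty_Icc]; exact hn
  set κmin : ℝ := (Finset.Icc 1 n).inf' hne κ with hκmin_def
  have hκminpos : 0 < κmin := by
    rw [hκmin_def, Finset.lt_inf'_iff]
    intro j hj; obtain ⟨h1, h2⟩ := Finset.mem_Icc.1 hj; exact hκ j h1 h2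
  have hκminle : ∀ j, 1 ≤ j → j ≤ n → κmin ≤ κ j := fun j h1 h2 =>
    Finset.inf'_le _ (Finset.mem_Icc.2 ⟨h1, h2⟩)
  set dmin : ℝ := (Finset.Icc 1 n).inf' hne d with hdmin_def
  set dmax : ℝ := (Finset.Icc 1 n).sup' hne d with hdmax_def
  have hdminpos : 0 < dmin := by
    rw [hdmin_def, Finset.lt_inf'_iff]
    intro j hj; obtain ⟨h1, h2⟩ := Finset.mem_Icc.1 hj; exact hdpos j h1 h2
  have hdminle : ∀ j, 1 ≤ j → j ≤ n → dmin ≤ d j := fun j h1 h2 =>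
    Finset.inf'_le _ (Finset.mem_Icc.2 ⟨h1, h2⟩)
  have hdmaxge : ∀ j, 1 ≤ j → j ≤ n → d j ≤ dmax := fun j h1 h2 =>
    Finset.le_sup' _ (Finset.mem_Icc.2 ⟨h1, h2⟩)
  have hdmaxpos : 0 < dmax := lt_of_lt_of_le (hdpos n hn le_rfl) (hdmaxge n hn le_rfl)
  set e1 : ℝ := Real.exp 1 with he1
  have he1pos : 0 < e1 := Real.exp_pos 1
  have he1ge : 1 ≤ e1 := Real.one_le_exp (by norm_num)
  set Ah : ℝ := 2 * q2 * e1 with hAh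
  have hAhpos : 0 < Ah := by rw [hAh]; positivity
  have hp1pos : (0:ℝ) < q1 * p ^ 2 + 1 := by positivity
  set aα : ℝ := q2 / (2 * (q1 * p ^ 2 + 1)) with haα
  have haαpos : 0 < aα := by rw [haα]; positivity
  have hκnpos : 0 < κ n := hκ n hn le_rfl
  set CZ : ℝ := b ^ 2 / κ n with hCZ
  have hCZpos : 0 < CZ := by rw [hCZ]; positivity
  set aZ : ℝ := q2 / (2 * (CZ + 1)) with haZ
  have haZpos : 0 < aZ := by rw [haZ]; positivity
  have hcoef1 : aα * (q1 * p ^ 2) ≤ q2 / 2 := by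
    rw [haα, div_mul_eq_mul_div, div_le_div_iff₀ (by positivity) (by norm_num)]
    nlinarith [sq_nonneg p, hq1.le, hq2.le]
  have hcoef2 : aZ * CZ ≤ q2 / 2 := by
    rw [haZ, div_mul_eq_mul_div, div_le_div_iff₀ (by positivity) (by norm_num)]
    nlinarith [hCZpos, hq2.le]
  set σ : ℝ := min (min (1 / 2 : ℝ) q2) (min q1 (κmin / 2)) with hσdef
  have hσpos : 0 < σ := by
    rw [hσdef]
    refine lt_min (lt_min (by norm_num) hq2) (lt_min hq1 (by linarith))
  have hσ1 : σ ≤ 1 / 2 := le_trans (min_le_left _ _) (min_le_left _ _)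
  have hσ2 : σ ≤ q2 := le_trans (min_le_left _ _) (min_le_right _ _)
  have hσ3 : σ ≤ q1 := le_trans (min_le_right _ _) (min_le_left _ _)
  have hσ4 : σ ≤ κmin / 2 := le_trans (min_le_right _ _) (min_le_right _ _)
  set C1 : ℝ := 1 + 1 / Ah + e1 / aα + 1 / (aZ * dmin) with hC1
  have hC1ge1 : 1 ≤ C1 := by
    rw [hC1]
    have : 0 < 1 / Ah := by positivity
    have : 0 < e1 / aα := by positivity
    have : 0 < 1 / (aZ * dmin) := by positivity
    linarith
  have hC1pos : 0 < C1 := lt_of_lt_of_le one_pos hC1ge1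
  set C2 : ℝ := Ah + e1 + aα + aZ * dmax + 1 with hC2
  have hC2pos : 0 < C2 := by rw [hC2]; positivity
  refine ⟨max (C1 * C2) 1, le_max_right _ _, σ, hσpos, ?_⟩
  intro Z α αx αt β βx βt h hZode hZn hαc hαdx hαdt hαxc hαtc hαeq hβc hβdx hβdt hβxc
    hβtc hβeq hbc0 hbc1 hhode hhm
  -- componentwise derivatives
  set hD : ℕ → ℝ → ℝ := fun i t =>
    if i = m then -c m * h t m else -c i * h t i + h t (i + 1) with hhD_def
  set ZD : ℕ → ℝ → ℝ := fun j t =>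
    if j = n then -κ n * Z t n + b * β 0 t else -κ j * Z t j + Z t (j + 1) with hZD_def
  have hhd : ∀ i, 1 ≤ i → i ≤ m → ∀ t : ℝ, 0 ≤ t →
      HasDerivAt (fun s => h s i) (hD i t) t := by
    intro i h1 h2 t ht
    rcases eq_or_ne i m with rfl | hne
    · simpa [hhD_def] using hhm t ht
    · have := hhode i h1 (by omega) t ht
      simpa [hhD_def, hne] using this
  have hZd : ∀ j, 1 ≤ j → j ≤ n → ∀ t : ℝ, 0 ≤ t →
      HasDerivAt (fun s => Z s j) (ZD j t) t := by
    intro j h1 h2 t ht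
    rcases eq_or_ne j n with rfl | hne
    · simpa [hZD_def] using hZn t ht
    · have := hZode j h1 (by omega) t ht
      simpa [hZD_def, hne] using this
  set Hf : ℝ → ℝ := fun t => ∑ i ∈ Finset.Icc 1 m, h t i ^ 2 with hHf
  set VZ : ℝ → ℝ := fun t => ∑ j ∈ Finset.Icc 1 n, d j * Z t j ^ 2 with hVZ
  set Iβ : ℝ → ℝ := fun t => ∫ x in (0:ℝ)..1, Real.exp (1 * x) * β x t ^ 2 with hIβf
  set Iα : ℝ → ℝ := fun t => ∫ x in (0:ℝ)..1, Real.exp ((-1) * x) * α x t ^ 2 with hIαf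
  set V : ℝ → ℝ := fun t => Ah * Hf t + Iβ t + aα * Iα t + aZ * VZ t with hVf
  -- derivatives of the ODE energies
  have hHder : ∀ t : ℝ, 0 ≤ t →
      HasDerivAt Hf (∑ i ∈ Finset.Icc 1 m, 2 * h t i * hD i t) t := by
    intro t ht
    rw [hHf]
    refine HasDerivAt.fun_sum (fun i hi => ?_)
    obtain ⟨h1, h2⟩ := Finset.mem_Icc.1 hi
    have := (hhd i h1 h2 t ht).fun_pow 2
    refine this.congr_deriv ?_
    push_cast; ring
  have hVZder : ∀ t : ℝ, 0 ≤ t →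
      HasDerivAt VZ (∑ j ∈ Finset.Icc 1 n, d j * (2 * Z t j * ZD j t)) t := by
    intro t ht
    rw [hVZ]
    refine HasDerivAt.fun_sum (fun j hj => ?_)
    obtain ⟨h1, h2⟩ := Finset.mem_Icc.1 hj
    have := ((hZd j h1 h2 t ht).fun_pow 2).const_mul (d j)
    refine this.congr_deriv ?_
    push_cast; ring
  -- joint continuity of the weighted integrands
  have hwcont : ∀ w : ℝ, Continuous (fun q : ℝ × ℝ => Real.exp (w * q.1)) := fun w =>
    Real.continuous_exp.comp (continuous_const.mul continuous_fst)
  have hβcont2 : ContinuousOn (fun q : ℝ × ℝ => Real.exp (1 * q.1) * β q.1 q.2 ^ 2)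
      (Icc 0 1 ×ˢ Ici 0) :=
    ((hwcont 1).continuousOn).mul (hβc.pow 2)
  have hαcont2 : ContinuousOn (fun q : ℝ × ℝ => Real.exp ((-1) * q.1) * α q.1 q.2 ^ 2)
      (Icc 0 1 ×ˢ Ici 0) :=
    ((hwcont (-1)).continuousOn).mul (hαc.pow 2)
  have hIβcont : ContinuousOn Iβ (Ici 0) := param_continuousOn hβcont2
  have hIαcont : ContinuousOn Iα (Ici 0) := param_continuousOn hαcont2
  have hHcont : ContinuousOn Hf (Ici 0) := fun t ht =>
    ((hHder t ht).continuousAt).continuousWithinAt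
  have hVZcont : ContinuousOn VZ (Ici 0) := fun t ht =>
    ((hVZder t ht).continuousAt).continuousWithinAt
  have hVcont : ContinuousOn V (Ici 0) := by
    rw [hVf]
    exact (((continuousOn_const.mul hHcont).add hIβcont).add
      (continuousOn_const.mul hIαcont)).add (continuousOn_const.mul hVZcont)
  -- derivative of the transport energies at interior times
  have hIβder : ∀ t₀ : ℝ, 0 < t₀ →
      HasDerivAt Iβ (q2 * (e1 * h t₀ 1 ^ 2 - β 0 t₀ ^ 2 - Iβ t₀)) t₀ := by
    intro t₀ ht₀
    have ht₀' : t₀ ∈ Ici (0:ℝ) := le_of_lt ht₀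
    have hGt : ContinuousOn
        (fun q : ℝ × ℝ => Real.exp (1 * q.1) * (2 * β q.1 q.2 * βt q.1 q.2))
        (Icc 0 1 ×ˢ Ici 0) :=
      ((hwcont 1).continuousOn).mul ((continuousOn_const.mul hβc).mul hβtc)
    have hder : ∀ x ∈ Icc (0:ℝ) 1, ∀ t ∈ Ici (0:ℝ),
        HasDerivWithinAt (fun t' => Real.exp (1 * x) * β x t' ^ 2)
          (Real.exp (1 * x) * (2 * β x t * βt x t)) (Ici 0) t := by
      intro x hx t ht
      have := ((hβdt x hx t ht).fun_pow 2).const_mul (Real.exp (1 * x))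
      refine this.congr_deriv ?_
      push_cast; ring
    have hbig := param_hasDerivAt hβcont2 hGt hder ht₀
    have hval : (∫ x in (0:ℝ)..1, Real.exp (1 * x) * (2 * β x t₀ * βt x t₀))
        = q2 * (e1 * h t₀ 1 ^ 2 - β 0 t₀ ^ 2 - Iβ t₀) := by
      have hcg : EqOn (fun x => Real.exp (1 * x) * (2 * β x t₀ * βt x t₀))
          (fun x => q2 * (Real.exp (1 * x) * (2 * β x t₀ * βx x t₀))) (Set.uIcc 0 1) := by
        intro x hx
        rw [uIcc_of_le (by norm_num : (0:ℝ) ≤ 1)] at hx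
        simp only
        rw [hβeq x hx t₀ ht₀']
        ring
      rw [intervalIntegral.integral_congr hcg, intervalIntegral.integral_const_mul,
        ibp_exp 1 (sliceCont_x hβc ht₀') (sliceCont_x hβxc ht₀')
          (fun x hx => hβdx x hx t₀ ht₀'),
        hbc1 t₀ ht₀']
      rw [hIβf, he1]
      ring
    rw [← hval]
    exact hbig
  have hIαder : ∀ t₀ : ℝ, 0 < t₀ →
      HasDerivAt Iα
        (-q1 * (Real.exp (-1) * α 1 t₀ ^ 2 - α 0 t₀ ^ 2 + Iα t₀)) t₀ := by
    intro t₀ ht₀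
    have ht₀' : t₀ ∈ Ici (0:ℝ) := le_of_lt ht₀
    have hGt : ContinuousOn
        (fun q : ℝ × ℝ => Real.exp ((-1) * q.1) * (2 * α q.1 q.2 * αt q.1 q.2))
        (Icc 0 1 ×ˢ Ici 0) :=
      ((hwcont (-1)).continuousOn).mul ((continuousOn_const.mul hαc).mul hαtc)
    have hder : ∀ x ∈ Icc (0:ℝ) 1, ∀ t ∈ Ici (0:ℝ),
        HasDerivWithinAt (fun t' => Real.exp ((-1) * x) * α x t' ^ 2)
          (Real.exp ((-1) * x) * (2 * α x t * αt x t)) (Ici 0) t := by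
      intro x hx t ht
      have := ((hαdt x hx t ht).fun_pow 2).const_mul (Real.exp ((-1) * x))
      refine this.congr_deriv ?_
      push_cast; ring
    have hbig := param_hasDerivAt hαcont2 hGt hder ht₀
    have hval : (∫ x in (0:ℝ)..1, Real.exp ((-1) * x) * (2 * α x t₀ * αt x t₀))
        = -q1 * (Real.exp (-1) * α 1 t₀ ^ 2 - α 0 t₀ ^ 2 + Iα t₀) := by
      have hcg : EqOn (fun x => Real.exp ((-1) * x) * (2 * α x t₀ * αt x t₀))
          (fun x => (-q1) * (Real.exp ((-1) * x) * (2 * α x t₀ * αx x t₀))) (Set.uIcc 0 1) := by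
        intro x hx
        rw [uIcc_of_le (by norm_num : (0:ℝ) ≤ 1)] at hx
        simp only
        rw [hαeq x hx t₀ ht₀']
        ring
      rw [intervalIntegral.integral_congr hcg, intervalIntegral.integral_const_mul,
        ibp_exp (-1) (sliceCont_x hαc ht₀') (sliceCont_x hαxc ht₀')
          (fun x hx => hαdx x hx t₀ ht₀')]
      rw [hIαf]
      ring
    rw [← hval]
    exact hbig
  -- nonnegativity of energies
  have hHnonneg : ∀ t : ℝ, 0 ≤ Hf t := fun t =>
    Finset.sum_nonneg (fun i _ => sq_nonneg _)
  have hVZnonneg : ∀ t : ℝ, 0 ≤ VZ t := by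
    intro t
    refine Finset.sum_nonneg (fun j hj => ?_)
    obtain ⟨h1, h2⟩ := Finset.mem_Icc.1 hj
    have := hdpos j h1 h2
    positivity
  have hIβnonneg : ∀ t : ℝ, 0 ≤ Iβ t := by
    intro t
    simp only [hIβf]
    refine intervalIntegral.integral_nonneg (by norm_num) (fun x hx => by positivity)
  have hIαnonneg : ∀ t : ℝ, 0 ≤ Iα t := by
    intro t
    simp only [hIαf]
    refine intervalIntegral.integral_nonneg (by norm_num) (fun x hx => by positivity)
  -- derivative and decay of V
  have hVder : ∀ t₀ : ℝ, 0 < t₀ → ∃ DV : ℝ, HasDerivAt V DV t₀ ∧ DV ≤ -σ * V t₀ := by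
    intro t₀ ht₀
    have ht₀' : (0:ℝ) ≤ t₀ := le_of_lt ht₀
    refine ⟨Ah * (∑ i ∈ Finset.Icc 1 m, 2 * h t₀ i * hD i t₀)
        + q2 * (e1 * h t₀ 1 ^ 2 - β 0 t₀ ^ 2 - Iβ t₀)
        + (-q1 * (Real.exp (-1) * α 1 t₀ ^ 2 - α 0 t₀ ^ 2 + Iα t₀)) * aα
        + (∑ j ∈ Finset.Icc 1 n, d j * (2 * Z t₀ j * ZD j t₀)) * aZ, ?_, ?_⟩
    · rw [hVf]
      simp only [mul_comm aα _, mul_comm aZ _]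
      exact ((((hHder t₀ ht₀').const_mul Ah).add (hIβder t₀ ht₀)).add
        ((hIαder t₀ ht₀).mul_const aα)).add ((hVZder t₀ ht₀').mul_const aZ)
    · -- the Lyapunov inequality
      have hHb : (∑ i ∈ Finset.Icc 1 m, 2 * h t₀ i * hD i t₀) ≤ -Hf t₀ := by
        refine hchain_bound m hm c hc hcm (fun i => h t₀ i) (fun i => hD i t₀) ?_ ?_
        · intro i h1 h2
          simp only [hhD_def]
          rw [if_neg (by omega)]
        · simp [hhD_def]
      have hZb : (∑ j ∈ Finset.Icc 1 n, d j * (2 * Z t₀ j * ZD j t₀))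
          ≤ -(κmin / 2) * VZ t₀ + b ^ 2 / κ n * β 0 t₀ ^ 2 := by
        refine zchain_bound n hn κ hκ d hdpos hdrec hdn κmin hκminle b (β 0 t₀)
          (fun j => Z t₀ j) (fun j => ZD j t₀) ?_ ?_
        · intro j h1 h2
          simp only [hZD_def]
          rw [if_neg (by omega)]
        · simp [hZD_def]
      have hh1 : h t₀ 1 ^ 2 ≤ Hf t₀ :=
        Finset.single_le_sum (f := fun i => h t₀ i ^ 2) (fun i _ => sq_nonneg _)
          (Finset.mem_Icc.2 ⟨le_rfl, hm⟩)
      have hβ0 : (0:ℝ) ≤ β 0 t₀ ^ 2 := sq_nonneg _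
      have hα1 : (0:ℝ) ≤ Real.exp (-1) * α 1 t₀ ^ 2 := by positivity
      have hα0 : α 0 t₀ = p * β 0 t₀ := hbc0 t₀ ht₀'
      have k1 : aα * (q1 * p ^ 2) * β 0 t₀ ^ 2 ≤ q2 / 2 * β 0 t₀ ^ 2 :=
        mul_le_mul_of_nonneg_right hcoef1 hβ0
      have k2 : aZ * CZ * β 0 t₀ ^ 2 ≤ q2 / 2 * β 0 t₀ ^ 2 :=
        mul_le_mul_of_nonneg_right hcoef2 hβ0
      have s1 : σ * (Ah * Hf t₀) ≤ 1 / 2 * (Ah * Hf t₀) :=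
        mul_le_mul_of_nonneg_right hσ1 (mul_nonneg hAhpos.le (hHnonneg t₀))
      have s2 : σ * Iβ t₀ ≤ q2 * Iβ t₀ :=
        mul_le_mul_of_nonneg_right hσ2 (hIβnonneg t₀)
      have s3 : σ * (aα * Iα t₀) ≤ q1 * (aα * Iα t₀) :=
        mul_le_mul_of_nonneg_right hσ3 (mul_nonneg haαpos.le (hIαnonneg t₀))
      have s4 : σ * (aZ * VZ t₀) ≤ κmin / 2 * (aZ * VZ t₀) :=
        mul_le_mul_of_nonneg_right hσ4 (mul_nonneg haZpos.le (hVZnonneg t₀))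
      have m1 : Ah * (∑ i ∈ Finset.Icc 1 m, 2 * h t₀ i * hD i t₀) ≤ Ah * (-Hf t₀) :=
        mul_le_mul_of_nonneg_left hHb hAhpos.le
      have m2 : (∑ j ∈ Finset.Icc 1 n, d j * (2 * Z t₀ j * ZD j t₀)) * aZ
          ≤ (-(κmin / 2) * VZ t₀ + b ^ 2 / κ n * β 0 t₀ ^ 2) * aZ :=
        mul_le_mul_of_nonneg_right hZb haZpos.le
      have m3 : q2 * (e1 * h t₀ 1 ^ 2) ≤ q2 * (e1 * Hf t₀) :=
        mul_le_mul_of_nonneg_left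
          (mul_le_mul_of_nonneg_left hh1 he1pos.le) hq2.le
      have m4 : 0 ≤ q1 * (Real.exp (-1) * α 1 t₀ ^ 2) * aα := by positivity
      have hVexp : V t₀ = Ah * Hf t₀ + Iβ t₀ + aα * Iα t₀ + aZ * VZ t₀ := rfl
      have hCZeq : b ^ 2 / κ n = CZ := by rw [hCZ]
      rw [hVexp, hα0]
      rw [hCZeq] at m2
      have eAh : q2 * (e1 * Hf t₀) = 1 / 2 * (Ah * Hf t₀) := by rw [hAh]; ring
      linarith [s1, s2, s3, s4, m1, m2, m3, m4, k1, k2, eAh]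
  -- the Lyapunov function decays exponentially
  have hgmono : AntitoneOn (fun s => V s * Real.exp (σ * s)) (Ici 0) := by
    refine antitoneOn_of_deriv_nonpos (convex_Ici 0)
      (hVcont.mul ((Real.continuous_exp.comp (continuous_const.mul continuous_id)).continuousOn)) ?_ ?_
    · intro t htI
      rw [interior_Ici] at htI
      obtain ⟨DV, h1, _⟩ := hVder t (mem_Ioi.1 htI)
      have hexp : HasDerivAt (fun s : ℝ => Real.exp (σ * s)) (σ * Real.exp (σ * t)) t := by
        have h0 : HasDerivAt (fun s : ℝ => σ * s) σ t := by
          simpa using (hasDerivAt_id t).const_mul σ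
        simpa [mul_comm] using h0.exp
      exact (h1.mul hexp).differentiableAt.differentiableWithinAt
    · intro t htI
      rw [interior_Ici] at htI
      obtain ⟨DV, h1, h2⟩ := hVder t (mem_Ioi.1 htI)
      have hexp : HasDerivAt (fun s : ℝ => Real.exp (σ * s)) (σ * Real.exp (σ * t)) t := by
        have h0 : HasDerivAt (fun s : ℝ => σ * s) σ t := by
          simpa using (hasDerivAt_id t).const_mul σ
        simpa [mul_comm] using h0.exp
      rw [(h1.fun_mul hexp).deriv]
      have hE : 0 < Real.exp (σ * t) := Real.exp_pos _
      have := mul_le_mul_of_nonneg_right h2 hE.le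
      nlinarith [this]
  have hdecay : ∀ t : ℝ, 0 ≤ t → V t ≤ V 0 * Real.exp (-σ * t) := by
    intro t ht
    have hmono := hgmono (mem_Ici.2 le_rfl) (mem_Ici.2 ht) ht
    simp only [mul_zero, Real.exp_zero, mul_one] at hmono
    have := mul_le_mul_of_nonneg_right hmono (Real.exp_pos (-(σ * t))).le
    rw [mul_assoc, ← Real.exp_add, add_neg_cancel, Real.exp_zero, mul_one] at this
    calc V t ≤ V 0 * Real.exp (-(σ * t)) := this
    _ = V 0 * Real.exp (-σ * t) := by rw [neg_mul]
  -- comparison of Ξ with V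
  have hintβ : ∀ t : ℝ, 0 ≤ t → IntervalIntegrable (fun x => β x t ^ 2) volume 0 1 := by
    intro t ht
    apply ContinuousOn.intervalIntegrable
    rw [uIcc_of_le (by norm_num : (0:ℝ) ≤ 1)]
    exact (sliceCont_x hβc ht).pow 2
  have hintwβ : ∀ t : ℝ, 0 ≤ t →
      IntervalIntegrable (fun x => Real.exp (1 * x) * β x t ^ 2) volume 0 1 := by
    intro t ht
    apply ContinuousOn.intervalIntegrable
    rw [uIcc_of_le (by norm_num : (0:ℝ) ≤ 1)]
    exact ((Real.continuous_exp.comp (continuous_const.mul continuous_id)).continuousOn).mul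
      ((sliceCont_x hβc ht).pow 2)
  have hintα : ∀ t : ℝ, 0 ≤ t → IntervalIntegrable (fun x => α x t ^ 2) volume 0 1 := by
    intro t ht
    apply ContinuousOn.intervalIntegrable
    rw [uIcc_of_le (by norm_num : (0:ℝ) ≤ 1)]
    exact (sliceCont_x hαc ht).pow 2
  have hintwα : ∀ t : ℝ, 0 ≤ t →
      IntervalIntegrable (fun x => Real.exp ((-1) * x) * α x t ^ 2) volume 0 1 := by
    intro t ht
    apply ContinuousOn.intervalIntegrable
    rw [uIcc_of_le (by norm_num : (0:ℝ) ≤ 1)]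
    exact ((Real.continuous_exp.comp (continuous_const.mul continuous_id)).continuousOn).mul
      ((sliceCont_x hαc ht).pow 2)
  have hcomp1 : ∀ t : ℝ, 0 ≤ t → (∫ x in (0:ℝ)..1, β x t ^ 2) ≤ Iβ t := by
    intro t ht
    simp only [hIβf]
    refine intervalIntegral.integral_mono_on (by norm_num) (hintβ t ht) (hintwβ t ht) ?_
    intro x hx
    exact le_mul_of_one_le_left (sq_nonneg _) (Real.one_le_exp (by nlinarith [hx.1]))
  have hcomp4 : ∀ t : ℝ, 0 ≤ t → Iβ t ≤ e1 * (∫ x in (0:ℝ)..1, β x t ^ 2) := by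
    intro t ht
    simp only [hIβf]
    have : (∫ x in (0:ℝ)..1, Real.exp (1 * x) * β x t ^ 2)
        ≤ ∫ x in (0:ℝ)..1, e1 * β x t ^ 2 := by
      refine intervalIntegral.integral_mono_on (by norm_num) (hintwβ t ht)
        ((hintβ t ht).const_mul e1) ?_
      intro x hx
      have h1 : Real.exp (1 * x) ≤ e1 := by
        rw [he1]; exact Real.exp_le_exp.2 (by nlinarith [hx.2])
      have := mul_le_mul_of_nonneg_right h1 (sq_nonneg (β x t))
      linarith
    rwa [intervalIntegral.integral_const_mul] at this
  have hcomp2 : ∀ t : ℝ, 0 ≤ t → (∫ x in (0:ℝ)..1, α x t ^ 2) ≤ e1 * Iα t := by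
    intro t ht
    simp only [hIαf]
    have : (∫ x in (0:ℝ)..1, α x t ^ 2)
        ≤ ∫ x in (0:ℝ)..1, e1 * (Real.exp ((-1) * x) * α x t ^ 2) := by
      refine intervalIntegral.integral_mono_on (by norm_num) (hintα t ht)
        ((hintwα t ht).const_mul e1) ?_
      intro x hx
      have h1 : (1:ℝ) ≤ e1 * Real.exp ((-1) * x) := by
        rw [he1, ← Real.exp_add]
        exact Real.one_le_exp (by nlinarith [hx.2])
      have := mul_le_mul_of_nonneg_right h1 (sq_nonneg (α x t))
      linarith
    rwa [intervalIntegral.integral_const_mul] at this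
  have hcomp5 : ∀ t : ℝ, 0 ≤ t → Iα t ≤ ∫ x in (0:ℝ)..1, α x t ^ 2 := by
    intro t ht
    simp only [hIαf]
    refine intervalIntegral.integral_mono_on (by norm_num) (hintwα t ht) (hintα t ht) ?_
    intro x hx
    have h1 : Real.exp ((-1) * x) ≤ Real.exp 0 := Real.exp_le_exp.2 (by nlinarith [hx.1])
    rw [Real.exp_zero] at h1
    have := mul_le_mul_of_nonneg_right h1 (sq_nonneg (α x t))
    linarith
  have hZlow : ∀ t : ℝ, dmin * (∑ j ∈ Finset.Icc 1 n, Z t j ^ 2) ≤ VZ t := by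
    intro t
    rw [Finset.mul_sum]
    refine Finset.sum_le_sum (fun j hj => ?_)
    obtain ⟨h1, h2⟩ := Finset.mem_Icc.1 hj
    exact mul_le_mul_of_nonneg_right (hdminle j h1 h2) (sq_nonneg _)
  have hZhigh : ∀ t : ℝ, VZ t ≤ dmax * (∑ j ∈ Finset.Icc 1 n, Z t j ^ 2) := by
    intro t
    rw [Finset.mul_sum]
    refine Finset.sum_le_sum (fun j hj => ?_)
    obtain ⟨h1, h2⟩ := Finset.mem_Icc.1 hj
    exact mul_le_mul_of_nonneg_right (hdmaxge j h1 h2) (sq_nonneg _)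
  have hZsumnonneg : ∀ t : ℝ, 0 ≤ ∑ j ∈ Finset.Icc 1 n, Z t j ^ 2 := fun t =>
    Finset.sum_nonneg (fun j _ => sq_nonneg _)
  have hβintnonneg : ∀ t : ℝ, 0 ≤ ∫ x in (0:ℝ)..1, β x t ^ 2 := fun t =>
    intervalIntegral.integral_nonneg (by norm_num) (fun x _ => sq_nonneg _)
  have hαintnonneg : ∀ t : ℝ, 0 ≤ ∫ x in (0:ℝ)..1, α x t ^ 2 := fun t =>
    intervalIntegral.integral_nonneg (by norm_num) (fun x _ => sq_nonneg _)
  -- Ξ ≤ C1 · V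
  have hstep1 : ∀ t : ℝ, 0 ≤ t → targetNorm m n α β h Z t ≤ C1 * V t := by
    intro t ht
    have f1 : (∫ x in (0:ℝ)..1, β x t ^ 2) ≤ C1 * Iβ t :=
      (hcomp1 t ht).trans (le_mul_of_one_le_left (hIβnonneg t) hC1ge1)
    have he1leC1aα : e1 ≤ C1 * aα := by
      have h1 : e1 / aα ≤ C1 := by
        rw [hC1]
        have : 0 < 1 / Ah := by positivity
        have : 0 < 1 / (aZ * dmin) := by positivity
        linarith
      have := mul_le_mul_of_nonneg_right h1 haαpos.le
      rwa [div_mul_cancel₀ _ haαpos.ne'] at this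
    have f2 : (∫ x in (0:ℝ)..1, α x t ^ 2) ≤ C1 * (aα * Iα t) := by
      refine (hcomp2 t ht).trans ?_
      have := mul_le_mul_of_nonneg_right he1leC1aα (hIαnonneg t)
      linarith [this]
    have h1leC1Ah : 1 ≤ C1 * Ah := by
      have h1 : 1 / Ah ≤ C1 := by
        rw [hC1]
        have : 0 < e1 / aα := by positivity
        have : 0 < 1 / (aZ * dmin) := by positivity
        linarith
      have := mul_le_mul_of_nonneg_right h1 hAhpos.le
      rwa [div_mul_cancel₀ _ hAhpos.ne'] at this
    have f3 : Hf t ≤ C1 * (Ah * Hf t) := by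
      have := mul_le_mul_of_nonneg_right h1leC1Ah (hHnonneg t)
      linarith [this]
    have h1leC1aZdmin : 1 ≤ C1 * (aZ * dmin) := by
      have h1 : 1 / (aZ * dmin) ≤ C1 := by
        rw [hC1]
        have : 0 < e1 / aα := by positivity
        have : 0 < 1 / Ah := by positivity
        linarith
      have h2 : 0 < aZ * dmin := by positivity
      have := mul_le_mul_of_nonneg_right h1 h2.le
      rwa [div_mul_cancel₀ _ h2.ne'] at this
    have f4 : (∑ j ∈ Finset.Icc 1 n, Z t j ^ 2) ≤ C1 * (aZ * VZ t) := by
      have u1 := mul_le_mul_of_nonneg_right h1leC1aZdmin (hZsumnonneg t)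
      have u2 := mul_le_mul_of_nonneg_left (hZlow t)
        (by positivity : (0:ℝ) ≤ C1 * aZ)
      linarith [u1, u2]
    have hVexp : V t = Ah * Hf t + Iβ t + aα * Iα t + aZ * VZ t := rfl
    simp only [targetNorm]
    rw [show (∑ i ∈ Finset.Icc 1 m, h t i ^ 2) = Hf t from rfl]
    rw [hVexp]
    linarith [f1, f2, f3, f4]
  -- V 0 ≤ C2 · Ξ 0
  have hstep2 : V 0 ≤ C2 * targetNorm m n α β h Z 0 := by
    have g1 : Ah * Hf 0 ≤ C2 * Hf 0 := by
      refine mul_le_mul_of_nonneg_right ?_ (hHnonneg 0)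
      rw [hC2]
      have : 0 < aZ * dmax := by positivity
      linarith
    have g2 : Iβ 0 ≤ C2 * (∫ x in (0:ℝ)..1, β x 0 ^ 2) := by
      refine (hcomp4 0 le_rfl).trans ?_
      refine mul_le_mul_of_nonneg_right ?_ (hβintnonneg 0)
      rw [hC2]
      have : 0 < aZ * dmax := by positivity
      linarith
    have g3 : aα * Iα 0 ≤ C2 * (∫ x in (0:ℝ)..1, α x 0 ^ 2) := by
      have h1 : aα * Iα 0 ≤ aα * ∫ x in (0:ℝ)..1, α x 0 ^ 2 :=
        mul_le_mul_of_nonneg_left (hcomp5 0 le_rfl) haαpos.le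
      refine h1.trans (mul_le_mul_of_nonneg_right ?_ (hαintnonneg 0))
      rw [hC2]
      have : 0 < aZ * dmax := by positivity
      linarith
    have g4 : aZ * VZ 0 ≤ C2 * (∑ j ∈ Finset.Icc 1 n, Z 0 j ^ 2) := by
      have h1 : aZ * VZ 0 ≤ aZ * (dmax * ∑ j ∈ Finset.Icc 1 n, Z 0 j ^ 2) :=
        mul_le_mul_of_nonneg_left (hZhigh 0) haZpos.le
      refine h1.trans ?_
      have h2 : aZ * dmax ≤ C2 := by
        rw [hC2]
        linarith
      have := mul_le_mul_of_nonneg_right h2 (hZsumnonneg 0)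
      linarith [this]
    have hVexp : V 0 = Ah * Hf 0 + Iβ 0 + aα * Iα 0 + aZ * VZ 0 := rfl
    simp only [targetNorm]
    rw [hVexp]
    rw [show (∑ i ∈ Finset.Icc 1 m, h 0 i ^ 2) = Hf 0 from rfl]
    linarith [g1, g2, g3, g4]
  -- conclusion
  intro t ht
  have hΞ0nonneg : 0 ≤ targetNorm m n α β h Z 0 := by
    simp only [targetNorm]
    have := hβintnonneg 0
    have := hαintnonneg 0
    have := hHnonneg 0
    have := hZsumnonneg 0
    rw [show (∑ i ∈ Finset.Icc 1 m, h 0 i ^ 2) = Hf 0 from rfl]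
    linarith
  have hE : (0:ℝ) < Real.exp (-σ * t) := Real.exp_pos _
  have c1 : targetNorm m n α β h Z t ≤ C1 * V t := hstep1 t ht
  have c2 : C1 * V t ≤ C1 * (V 0 * Real.exp (-σ * t)) :=
    mul_le_mul_of_nonneg_left (hdecay t ht) hC1pos.le
  have c3 : C1 * (V 0 * Real.exp (-σ * t)) ≤ C1 * (C2 * targetNorm m n α β h Z 0) * Real.exp (-σ * t) := by
    have := mul_le_mul_of_nonneg_right
      (mul_le_mul_of_nonneg_left hstep2 hC1pos.le) hE.le
    calc C1 * (V 0 * Real.exp (-σ * t)) = C1 * V 0 * Real.exp (-σ * t) := by ring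
    _ ≤ C1 * (C2 * targetNorm m n α β h Z 0) * Real.exp (-σ * t) := this
  have c4 : C1 * (C2 * targetNorm m n α β h Z 0) * Real.exp (-σ * t)
      ≤ max (C1 * C2) 1 * targetNorm m n α β h Z 0 * Real.exp (-σ * t) := by
    refine mul_le_mul_of_nonneg_right ?_ hE.le
    have h1 : C1 * C2 ≤ max (C1 * C2) 1 := le_max_left _ _
    calc C1 * (C2 * targetNorm m n α β h Z 0) = C1 * C2 * targetNorm m n α β h Z 0 := by ring
    _ ≤ max (C1 * C2) 1 * targetNorm m n α β h Z 0 :=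
      mul_le_mul_of_nonneg_right h1 hΞ0nonneg
  linarith [c1, c2, c3, c4]
end

section
/- Let n ≥ 1 be an integer, l_1, …, l_n ∈ ℝ, b > 0, and κ_1, …, κ_n > 0. Let A be the n×n matrix whose (i, i+1) entries equal 1 for 1 ≤ i ≤ n−1, whose last row is (l_1, …, l_n), and whose remaining entries are zero, and let B = (0, …, 0, b)ᵀ ∈ ℝⁿ. Let I ⊆ ℝ be an interval, w₀ : I → ℝ continuous, and Y = (y_1, …, y_n) : I → ℝⁿ continuously differentiable with Ẏ(t) = A Y(t) + B w₀(t) for all t ∈ I. Define linear functions g_0 = 0 and g_i(y_1,…,y_i) = −κ_i(y_i − g_{i−1}(y_1,…,y_{i−1})) + Σ_{j=1}^{i−1} (∂g_{i−1}/∂y_j) y_{j+1} for 1 ≤ i ≤ n−1 (with constant coefficients ∂g_{i−1}/∂y_j), and set z_i(t) = y_i(t) − g_{i−1}(y_1(t),…,y_{i−1}(t)), Z = (z_1, …, z_n). Then for all t ∈ I, Ż(t) = A_Z Z(t) + B w₀(t) − B Kᵀ Y(t), where A_Z is the n×n matrix with −κ_i in the (i,i) entries, 1 in the (i,i+1) entries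 and zeros elsewhere, and Kᵀ is the constant row vector (1/b)·[ −l_1 + κ_n ∂g_{n−1}/∂y_1, −l_2 + ∂g_{n−1}/∂y_1 + κ_n ∂g_{n−1}/∂y_2, …, −l_{n−1} + ∂g_{n−1}/∂y_{n−2} + κ_n ∂g_{n−1}/∂y_{n−1}, −l_n + ∂g_{n−1}/∂y_{n−1} − κ_n ]. -/
/-- The backstepping transformation functions `g_i` (equations (12)–(14)):
`g_0 = 0`,
`g_i(y) = -κ_i (y_i - g_{i-1}(y)) + Σ_{j=1}^{i-1} (∂g_{i-1}/∂y_j) y_{j+1}`;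
the constant coefficient `∂g_{i-1}/∂y_j` of the linear function `g_{i-1}` is
its value on the `j`-th standard basis vector. -/
noncomputable def gBack (κ : ℕ → ℝ) : ℕ → (ℕ → ℝ) → ℝ
  | 0, _ => 0
  | i + 1, y =>
      -κ (i + 1) * (y (i + 1) - gBack κ i y) +
        ∑ j ∈ Finset.Icc 1 i,
          gBack κ i (fun k => if k = j then 1 else 0) * y (j + 1)

lemma gBack_add (κ : ℕ → ℝ) : ∀ (i : ℕ) (u v : ℕ → ℝ),
    gBack κ i (fun k => u k + v k) = gBack κ i u + gBack κ i v
  | 0, u, v => by simp [gBack]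
  | i + 1, u, v => by
      simp only [gBack, gBack_add κ i u v, mul_add, Finset.sum_add_distrib]
      ring

lemma gBack_smul (κ : ℕ → ℝ) (a : ℝ) : ∀ (i : ℕ) (u : ℕ → ℝ),
    gBack κ i (fun k => a * u k) = a * gBack κ i u
  | 0, u => by simp [gBack]
  | i + 1, u => by
      simp only [gBack, gBack_smul κ a i u]
      rw [Finset.sum_congr rfl
        (fun j _ => by ring :
          ∀ j ∈ Finset.Icc 1 i,
            gBack κ i (fun k => if k = j then 1 else 0) * (a * u (j + 1)) =
              a * (gBack κ i (fun k => if k = j then 1 else 0) * u (j + 1))),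
        ← Finset.mul_sum]
      ring

lemma gBack_zero (κ : ℕ → ℝ) (i : ℕ) : gBack κ i (fun _ => 0) = 0 := by
  have := gBack_smul κ 0 i (fun _ => 0)
  simpa using this

lemma gBack_congr (κ : ℕ → ℝ) : ∀ (i : ℕ) (u v : ℕ → ℝ),
    (∀ k, 1 ≤ k → k ≤ i → u k = v k) → gBack κ i u = gBack κ i v
  | 0, u, v, _ => by simp [gBack]
  | i + 1, u, v, h => by
      simp only [gBack]
      rw [gBack_congr κ i u v (fun k h1 h2 => h k h1 (by omega)),
        h (i + 1) (by omega) le_rfl]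
      congr 1
      refine Finset.sum_congr rfl fun j hj => ?_
      rw [Finset.mem_Icc] at hj
      rw [h (j + 1) (by omega) (by omega)]

lemma gBack_sum (κ : ℕ → ℝ) (i : ℕ) {α : Type*} (s : Finset α) (f : α → ℕ → ℝ) :
    gBack κ i (fun k => ∑ j ∈ s, f j k) = ∑ j ∈ s, gBack κ i (f j) := by
  classical
  induction s using Finset.induction with
  | empty => simpa using gBack_zero κ i
  | @insert a s h ih =>
      rw [Finset.sum_insert h, ← ih, ← gBack_add]
      congr 1
      funext k
      rw [Finset.sum_insert h]

lemma gBack_expand (κ : ℕ → ℝ) (i : ℕ) (y : ℕ → ℝ) :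
    gBack κ i y =
      ∑ j ∈ Finset.Icc 1 i, gBack κ i (fun k => if k = j then 1 else 0) * y j := by
  have h1 : gBack κ i y =
      gBack κ i (fun k => ∑ j ∈ Finset.Icc 1 i, y j * (if k = j then 1 else 0)) := by
    apply gBack_congr
    intro k h1 h2
    rw [Finset.sum_eq_single k]
    · simp
    · intro j _ hj
      simp [Ne.symm hj]
    · intro hk
      simp [Finset.mem_Icc, h1, h2] at hk
  rw [h1, gBack_sum]
  refine Finset.sum_congr rfl fun j _ => ?_
  rw [gBack_smul]
  ring

lemma sum_shift_aux (m : ℕ) (f g : ℕ → ℝ) :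
    ∑ j ∈ Finset.Icc 2 (m + 1), f (j - 1) * g j =
      ∑ j ∈ Finset.Icc 1 m, f j * g (j + 1) := by
  induction m with
  | zero => simp
  | succ m ih =>
      rw [Finset.sum_Icc_succ_top (show 2 ≤ m + 1 + 1 by omega)]
      conv_rhs => rw [Finset.sum_Icc_succ_top (show 1 ≤ m + 1 by omega)]
      rw [ih, show m + 1 + 1 - 1 = m + 1 from rfl]

/-- The first (ODE) nonundershooting backstepping
transformation: the companion-form ODE `Ẏ = AY + B w₀(t)` (componentwise
`y_i' = y_{i+1}` for `i ≤ n-1` and `y_n' = Σ_j l_j y_j + b w₀(t)`, which is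
exactly `Ẏ = AY + Bw₀` for the stated `A` and `B = (0,…,0,b)ᵀ`) is mapped by
`z_i = y_i - g_{i-1}(y_1,…,y_{i-1})` into `Ż = A_Z Z + B w₀ - B Kᵀ Y`
(componentwise `z_i' = -κ_i z_i + z_{i+1}` for `i ≤ n-1` and
`z_n' = -κ_n z_n + b w₀ - b Σ_j K_j y_j`), with the stated constant row
vector `K`. -/
theorem first_backstepping_transformation
    (n : ℕ) (hn : 1 ≤ n) (l : ℕ → ℝ) (b : ℝ) (hb : 0 < b)
    (κ : ℕ → ℝ) (hκ : ∀ i, 1 ≤ i → i ≤ n → 0 < κ i)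
    (I : Set ℝ) (hI : I.OrdConnected)
    (w0 : ℝ → ℝ) (hw0 : ContinuousOn w0 I)
    (Y : ℝ → ℕ → ℝ)
    -- Ẏ(t) = A Y(t) + B w₀(t), componentwise:
    (hY : ∀ t ∈ I, ∀ i, 1 ≤ i → i ≤ n - 1 →
      HasDerivAt (fun s => Y s i) (Y t (i + 1)) t)
    (hYn : ∀ t ∈ I,
      HasDerivAt (fun s => Y s n)
        ((∑ j ∈ Finset.Icc 1 n, l j * Y t j) + b * w0 t) t)
    -- the transformed state Z and the gain row vector K:
    (z : ℝ → ℕ → ℝ) (hz : ∀ t i, z t i = Y t i - gBack κ (i - 1) (Y t))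
    (K : ℕ → ℝ)
    (hK : ∀ j, 1 ≤ j → j ≤ n → K j =
      (1 / b) * (-l j
        + (if 2 ≤ j then gBack κ (n - 1) (fun k => if k = j - 1 then 1 else 0)
            else 0)
        + (if j ≤ n - 1 then
            κ n * gBack κ (n - 1) (fun k => if k = j then 1 else 0) else 0)
        + (if j = n then -κ n else 0))) :
    -- Ż(t) = A_Z Z(t) + B w₀(t) - B Kᵀ Y(t), componentwise:
    (∀ t ∈ I, ∀ i, 1 ≤ i → i ≤ n - 1 →
      HasDerivAt (fun s => z s i) (-κ i * z t i + z t (i + 1)) t) ∧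
    (∀ t ∈ I,
      HasDerivAt (fun s => z s n)
        (-κ n * z t n + b * w0 t - b * ∑ j ∈ Finset.Icc 1 n, K j * Y t j) t) := by
  classical
  have hzfun : ∀ m : ℕ, (fun s => z s (m + 1)) = fun s => Y s (m + 1) -
      ∑ j ∈ Finset.Icc 1 m, gBack κ m (fun k => if k = j then 1 else 0) * Y s j := by
    intro m
    funext s
    rw [hz, Nat.add_sub_cancel, gBack_expand]
  constructor
  · intro t ht i hi1 hi2
    obtain ⟨m, rfl⟩ : ∃ m, i = m + 1 := ⟨i - 1, by omega⟩
    have hd : HasDerivAt (fun s => z s (m + 1))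
        (Y t (m + 1 + 1) - ∑ j ∈ Finset.Icc 1 m,
          gBack κ m (fun k => if k = j then 1 else 0) * Y t (j + 1)) t := by
      rw [hzfun m]
      exact (hY t ht (m + 1) (by omega) (by omega)).sub
        (HasDerivAt.fun_sum fun j hj => by
          rw [Finset.mem_Icc] at hj
          exact (hY t ht j (by omega) (by omega)).const_mul _)
    convert hd using 1
    rw [hz t (m + 1), hz t (m + 1 + 1), Nat.add_sub_cancel, Nat.add_sub_cancel]
    show -κ (m + 1) * (Y t (m + 1) - gBack κ m (Y t)) +
        (Y t (m + 1 + 1) - gBack κ (m + 1) (Y t)) = _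
    simp only [gBack]
    ring
  · intro t ht
    obtain ⟨m, rfl⟩ : ∃ m, n = m + 1 := ⟨n - 1, by omega⟩
    have hd : HasDerivAt (fun s => z s (m + 1))
        (((∑ j ∈ Finset.Icc 1 (m + 1), l j * Y t j) + b * w0 t) -
          ∑ j ∈ Finset.Icc 1 m,
            gBack κ m (fun k => if k = j then 1 else 0) * Y t (j + 1)) t := by
      rw [hzfun m]
      exact (hYn t ht).sub
        (HasDerivAt.fun_sum fun j hj => by
          rw [Finset.mem_Icc] at hj
          exact (hY t ht j (by omega) (by omega)).const_mul _)
    convert hd using 1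
    have e1 : m + 1 - 1 = m := rfl
    have hterm : ∀ j ∈ Finset.Icc 1 (m + 1), K j * Y t j =
        (1 / b) * ((-(l j * Y t j))
          + (if 2 ≤ j then gBack κ m (fun k => if k = j - 1 then 1 else 0)
              else 0) * Y t j
          + (if j ≤ m then
              κ (m + 1) * gBack κ m (fun k => if k = j then 1 else 0)
              else 0) * Y t j
          + (if j = m + 1 then -κ (m + 1) else 0) * Y t j) := by
      intro j hj
      rw [Finset.mem_Icc] at hj
      rw [hK j hj.1 hj.2, e1]
      ring
    have hSA : ∑ j ∈ Finset.Icc 1 (m + 1),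
        (if 2 ≤ j then gBack κ m (fun k => if k = j - 1 then 1 else 0)
          else 0) * Y t j =
        ∑ j ∈ Finset.Icc 1 m,
          gBack κ m (fun k => if k = j then 1 else 0) * Y t (j + 1) := by
      simp only [ite_mul, zero_mul]
      rw [← Finset.sum_filter]
      have hfil : (Finset.Icc 1 (m + 1)).filter (fun j => 2 ≤ j) =
          Finset.Icc 2 (m + 1) := by
        ext x
        simp only [Finset.mem_filter, Finset.mem_Icc]
        omega
      rw [hfil]
      exact sum_shift_aux m (fun j => gBack κ m (fun k => if k = j then 1 else 0))
        (fun j => Y t j)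
    have hSB : ∑ j ∈ Finset.Icc 1 (m + 1),
        (if j ≤ m then
          κ (m + 1) * gBack κ m (fun k => if k = j then 1 else 0)
          else 0) * Y t j = κ (m + 1) * gBack κ m (Y t) := by
      simp only [ite_mul, zero_mul]
      rw [← Finset.sum_filter]
      have hfil : (Finset.Icc 1 (m + 1)).filter (fun j => j ≤ m) =
          Finset.Icc 1 m := by
        ext x
        simp only [Finset.mem_filter, Finset.mem_Icc]
        omega
      rw [hfil, gBack_expand κ m (Y t), Finset.mul_sum]
      exact Finset.sum_congr rfl fun j _ => by ring
    have hSC : ∑ j ∈ Finset.Icc 1 (m + 1),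
        (if j = m + 1 then -κ (m + 1) else 0) * Y t j =
        -κ (m + 1) * Y t (m + 1) := by
      simp only [ite_mul, zero_mul]
      rw [Finset.sum_ite_eq' (Finset.Icc 1 (m + 1)) (m + 1)
        (fun j => -κ (m + 1) * Y t j)]
      simp [Finset.mem_Icc]
    have hKsum : b * ∑ j ∈ Finset.Icc 1 (m + 1), K j * Y t j =
        (∑ j ∈ Finset.Icc 1 (m + 1), -(l j * Y t j))
          + (∑ j ∈ Finset.Icc 1 m,
              gBack κ m (fun k => if k = j then 1 else 0) * Y t (j + 1))
          + κ (m + 1) * gBack κ m (Y t)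
          + (-κ (m + 1) * Y t (m + 1)) := by
      rw [Finset.sum_congr rfl hterm, ← Finset.mul_sum, ← mul_assoc,
        mul_one_div_cancel hb.ne', one_mul]
      simp only [Finset.sum_add_distrib]
      rw [hSA, hSB, hSC]
    have hneg : ∑ j ∈ Finset.Icc 1 (m + 1), -(l j * Y t j) =
        -∑ j ∈ Finset.Icc 1 (m + 1), l j * Y t j := by
      rw [Finset.sum_neg_distrib]
    rw [hz t (m + 1), e1, hKsum, hneg]
    ring
end

section
/- Let q1, q2 > 0 and d1, d2, p ∈ ℝ. Let F, H : 𝒟 → ℝ be continuously differentiable on the triangle 𝒟 = {(x,y) : 0 ≤ y ≤ x ≤ 1} and satisfy q2 ∂x F(x,y) − q1 ∂y F(x,y) = d2 H(x,y) and q2 ∂x H(x,y) + q2 ∂y H(x,y) = d1 F(x,y) on 𝒟, together with F(x,x) = −d2/(q1+q2) and H(x,0) = (q1 p / q2) F(x,0) for all x ∈ [0,1]. Let T > 0 and let z, w : [0,1] × [0,T] → ℝ be continuously differentiable and satisfy ∂t z(x,t) = −q1 ∂x z(x,t) + d1 w(x,t) and ∂t w(x,t) = q2 ∂x w(x,t)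 + d2 z(x,t) on [0,1] × [0,T], with z(0,t) = p w(0,t) for all t ∈ [0,T]. Define η(x,t) = w(x,t) − ∫₀ˣ F(x,y) z(y,t) dy − ∫₀ˣ H(x,y) w(y,t) dy. Then ∂t η(x,t) = q2 ∂x η(x,t) for all (x,t) ∈ [0,1] × [0,T]. -/
open Set intervalIntegral MeasureTheory Asymptotics Filter

lemma ftc_within' (a b : ℝ) (hab : a ≤ b) (f f' : ℝ → ℝ) (S : Set ℝ) (hS : Icc a b ⊆ S)
    (hd : ∀ s ∈ Icc a b, HasDerivWithinAt f (f' s) S s)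
    (hc : ContinuousOn f' (Icc a b)) :
    ∫ s in a..b, f' s = f b - f a := by
  apply integral_eq_sub_of_hasDeriv_right_of_le hab
  · exact fun s hs => ((hd s hs).mono hS).continuousWithinAt
  · intro s hs
    have h1 : HasDerivAt f (f' s) s :=
      ((hd s (Ioo_subset_Icc_self hs)).mono hS).hasDerivAt
        (mem_nhds_iff.2 ⟨Ioo a b, Ioo_subset_Icc_self, isOpen_Ioo, hs⟩)
    exact h1.hasDerivWithinAt
  · exact hc.intervalIntegrable_of_Icc hab

lemma ftc_within (a b : ℝ) (f f' : ℝ → ℝ) (S : Set ℝ) (hS : uIcc a b ⊆ S)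
    (hd : ∀ s ∈ uIcc a b, HasDerivWithinAt f (f' s) S s)
    (hc : ContinuousOn f' (uIcc a b)) :
    ∫ s in a..b, f' s = f b - f a := by
  rcases le_total a b with h | h
  · rw [uIcc_of_le h] at hS hd hc
    exact ftc_within' a b h f f' S hS hd hc
  · rw [uIcc_of_ge h] at hS hd hc
    rw [integral_symm, ftc_within' b a h f f' S hS hd hc]
    ring

lemma abs_sub_le_of_uIcc {s t t' : ℝ} (hs : s ∈ uIcc t t') : |s - t| ≤ |t' - t| := by
  rw [mem_uIcc] at hs
  rw [abs_sub_le_iff]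
  rcases hs with ⟨h1, h2⟩ | ⟨h1, h2⟩ <;>
    constructor <;> linarith [le_abs_self (t' - t), neg_abs_le (t' - t)]

/-- Differentiation under the integral sign, one-sided version on `Icc c d`. -/
lemma param_deriv (c d : ℝ) (g gt : ℝ → ℝ → ℝ)
    (hgc : ContinuousOn (fun q : ℝ × ℝ => g q.1 q.2) (Icc 0 1 ×ˢ Icc c d))
    (hgtc : ContinuousOn (fun q : ℝ × ℝ => gt q.1 q.2) (Icc 0 1 ×ˢ Icc c d))
    (hd : ∀ y ∈ Icc (0:ℝ) 1, ∀ s ∈ Icc c d, HasDerivWithinAt (g y) (gt y s) (Icc c d) s)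
    (x : ℝ) (hx : x ∈ Icc (0:ℝ) 1) (t : ℝ) (ht : t ∈ Icc c d) :
    HasDerivWithinAt (fun t' => ∫ y in (0:ℝ)..x, g y t') (∫ y in (0:ℝ)..x, gt y t)
      (Icc c d) t := by
  have hK : IsCompact (Icc (0:ℝ) 1 ×ˢ Icc c d) := (isCompact_Icc).prod isCompact_Icc
  have hu : UniformContinuousOn (fun q : ℝ × ℝ => gt q.1 q.2) (Icc 0 1 ×ˢ Icc c d) :=
    hK.uniformContinuousOn_of_continuous hgtc
  have hconty : ∀ s ∈ Icc c d, ContinuousOn (fun y => g y s) (Icc 0 1) := fun s hs =>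
    hgc.comp (continuous_id.prodMk continuous_const).continuousOn (fun y hy => ⟨hy, hs⟩)
  have hcontyt : ∀ s ∈ Icc c d, ContinuousOn (fun y => gt y s) (Icc 0 1) := fun s hs =>
    hgtc.comp (continuous_id.prodMk continuous_const).continuousOn (fun y hy => ⟨hy, hs⟩)
  have hcontst : ∀ y ∈ Icc (0:ℝ) 1, ContinuousOn (fun s => gt y s) (Icc c d) := fun y hy =>
    hgtc.comp (continuous_const.prodMk continuous_id).continuousOn (fun s hs => ⟨hy, hs⟩)
  have hsub : uIcc (0:ℝ) x ⊆ Icc 0 1 := uIcc_subset_Icc ⟨le_refl 0, zero_le_one⟩ hx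
  have hint : ∀ s ∈ Icc c d, IntervalIntegrable (fun y => g y s) volume 0 x := by
    intro s hs; exact ((hconty s hs).mono hsub).intervalIntegrable
  have hintt : IntervalIntegrable (fun y => gt y t) volume 0 x :=
    ((hcontyt t ht).mono hsub).intervalIntegrable
  rw [hasDerivWithinAt_iff_isLittleO, isLittleO_iff]
  intro ε hε
  obtain ⟨δ, hδ, hδu⟩ := Metric.uniformContinuousOn_iff.1 hu ε hε
  have hev1 : ∀ᶠ t' in nhdsWithin t (Icc c d), dist t' t < δ :=
    eventually_nhdsWithin_of_eventually_nhds
      (Metric.eventually_nhds_iff_ball.2 ⟨δ, hδ, fun y hy => hy⟩)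
  filter_upwards [hev1, self_mem_nhdsWithin] with t' hdist ht'
  have hT : uIcc t t' ⊆ Icc c d := uIcc_subset_Icc ht ht'
  have key : (∫ y in (0:ℝ)..x, g y t') - (∫ y in (0:ℝ)..x, g y t)
      - (t' - t) • (∫ y in (0:ℝ)..x, gt y t)
      = ∫ y in (0:ℝ)..x, (g y t' - g y t - (t' - t) * gt y t) := by
    have h1 : (t' - t) • (∫ y in (0:ℝ)..x, gt y t) = ∫ y in (0:ℝ)..x, (t' - t) * gt y t := by
      rw [smul_eq_mul, intervalIntegral.integral_const_mul]
    rw [h1, ← intervalIntegral.integral_sub (hint t' ht') (hint t ht),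
      ← intervalIntegral.integral_sub ((hint t' ht').sub (hint t ht)) (hintt.const_mul _)]
  have hbound : ∀ y ∈ uIoc (0:ℝ) x, ‖g y t' - g y t - (t' - t) * gt y t‖ ≤ ε * |t' - t| := by
    intro y hy
    have hy1 : y ∈ Icc (0:ℝ) 1 := hsub (uIoc_subset_uIcc hy)
    have hftc : g y t' - g y t = ∫ s in t..t', gt y s :=
      (ftc_within t t' (g y) (fun s => gt y s) (Icc c d) hT
        (fun s hs => hd y hy1 s (hT hs)) ((hcontst y hy1).mono hT)).symm
    have h2 : (t' - t) * gt y t = ∫ s in t..t', gt y t := by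
      rw [intervalIntegral.integral_const, smul_eq_mul]
    rw [hftc, h2, ← intervalIntegral.integral_sub
      (((hcontst y hy1).mono hT).intervalIntegrable) intervalIntegrable_const]
    apply intervalIntegral.norm_integral_le_of_norm_le_const
    intro s hs
    have hsI : s ∈ uIcc t t' := uIoc_subset_uIcc hs
    have hs' : s ∈ Icc c d := hT hsI
    have hds : dist (y, s) (y, t) < δ := by
      rw [Prod.dist_eq]
      simp only [dist_self, Real.dist_eq, max_lt_iff]
      refine ⟨hδ, lt_of_le_of_lt (abs_sub_le_of_uIcc hsI) ?_⟩
      rw [Real.dist_eq] at hdist; exact hdist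
    have := hδu (y, s) ⟨hy1, hs'⟩ (y, t) ⟨hy1, ht⟩ hds
    rw [Real.dist_eq] at this
    exact le_of_lt this
  rw [key]
  calc ‖∫ y in (0:ℝ)..x, (g y t' - g y t - (t' - t) * gt y t)‖
      ≤ ε * |t' - t| * |x - 0| := intervalIntegral.norm_integral_le_of_norm_le_const hbound
    _ ≤ ε * ‖t' - t‖ := by
        rw [Real.norm_eq_abs]
        have hx1 : |x - 0| ≤ 1 := by rw [sub_zero, abs_of_nonneg hx.1]; exact hx.2
        nlinarith [abs_nonneg (t' - t), mul_nonneg (le_of_lt hε) (abs_nonneg (t' - t))]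

/-- Leibniz rule with moving upper limit, one-sided on `Icc 0 1`. -/
lemma leibniz_rule (G Gx : ℝ → ℝ → ℝ)
    (hGc : ContinuousOn (fun q : ℝ × ℝ => G q.1 q.2) (Icc 0 1 ×ˢ Icc 0 1))
    (hGxc : ContinuousOn (fun q : ℝ × ℝ => Gx q.1 q.2) (Icc 0 1 ×ˢ Icc 0 1))
    (hd : ∀ y ∈ Icc (0:ℝ) 1, ∀ u ∈ Icc (0:ℝ) 1,
      HasDerivWithinAt (fun u' => G u' y) (Gx u y) (Icc 0 1) u)
    (x : ℝ) (hx : x ∈ Icc (0:ℝ) 1) :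
    HasDerivWithinAt (fun x' => ∫ y in (0:ℝ)..x', G x' y)
      (G x x + ∫ y in (0:ℝ)..x, Gx x y) (Icc 0 1) x := by
  have hK : IsCompact (Icc (0:ℝ) 1 ×ˢ Icc (0:ℝ) 1) := (isCompact_Icc).prod isCompact_Icc
  have huG : UniformContinuousOn (fun q : ℝ × ℝ => G q.1 q.2) (Icc 0 1 ×ˢ Icc 0 1) :=
    hK.uniformContinuousOn_of_continuous hGc
  have huGx : UniformContinuousOn (fun q : ℝ × ℝ => Gx q.1 q.2) (Icc 0 1 ×ˢ Icc 0 1) :=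
    hK.uniformContinuousOn_of_continuous hGxc
  have hconty : ∀ u ∈ Icc (0:ℝ) 1, ContinuousOn (fun y => G u y) (Icc 0 1) := fun u hu =>
    hGc.comp (continuous_const.prodMk continuous_id).continuousOn (fun y hy => ⟨hu, hy⟩)
  have hcontyx : ∀ u ∈ Icc (0:ℝ) 1, ContinuousOn (fun y => Gx u y) (Icc 0 1) := fun u hu =>
    hGxc.comp (continuous_const.prodMk continuous_id).continuousOn (fun y hy => ⟨hu, hy⟩)
  rw [hasDerivWithinAt_iff_isLittleO, isLittleO_iff]
  intro ε hε
  have hε2 : 0 < ε / 2 := by linarith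
  obtain ⟨δ₁, hδ₁, hδu₁⟩ := Metric.uniformContinuousOn_iff.1 huG (ε/2) hε2
  obtain ⟨δ₂, hδ₂, hδu₂⟩ := Metric.uniformContinuousOn_iff.1 huGx (ε/2) hε2
  set δ := min δ₁ δ₂ with hδdef
  have hδ : 0 < δ := lt_min hδ₁ hδ₂
  have hev1 : ∀ᶠ x' in nhdsWithin x (Icc 0 1), dist x' x < δ :=
    eventually_nhdsWithin_of_eventually_nhds
      (Metric.eventually_nhds_iff_ball.2 ⟨δ, hδ, fun y hy => hy⟩)
  filter_upwards [hev1, self_mem_nhdsWithin] with x' hdist hx'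
  rw [Real.dist_eq] at hdist
  have hXsub : uIcc x x' ⊆ Icc (0:ℝ) 1 := uIcc_subset_Icc hx hx'
  have h0x : uIcc (0:ℝ) x ⊆ Icc (0:ℝ) 1 := uIcc_subset_Icc ⟨le_refl 0, zero_le_one⟩ hx
  have h0x' : uIcc (0:ℝ) x' ⊆ Icc (0:ℝ) 1 := uIcc_subset_Icc ⟨le_refl 0, zero_le_one⟩ hx'
  -- integrability
  have i1 : IntervalIntegrable (fun y => G x' y) volume 0 x :=
    ((hconty x' hx').mono h0x).intervalIntegrable
  have i2 : IntervalIntegrable (fun y => G x' y) volume x x' :=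
    ((hconty x' hx').mono hXsub).intervalIntegrable
  have i3 : IntervalIntegrable (fun y => G x y) volume 0 x :=
    ((hconty x hx).mono h0x).intervalIntegrable
  have i4 : IntervalIntegrable (fun y => Gx x y) volume 0 x :=
    ((hcontyx x hx).mono h0x).intervalIntegrable
  -- decomposition
  have key : (∫ y in (0:ℝ)..x', G x' y) - (∫ y in (0:ℝ)..x, G x y)
      - (x' - x) • (G x x + ∫ y in (0:ℝ)..x, Gx x y)
      = (∫ y in x..x', (G x' y - G x x))
        + ∫ y in (0:ℝ)..x, (G x' y - G x y - (x' - x) * Gx x y) := by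
    have hsplit : (∫ y in (0:ℝ)..x', G x' y)
        = (∫ y in (0:ℝ)..x, G x' y) + ∫ y in x..x', G x' y :=
      (integral_add_adjacent_intervals i1 i2).symm
    have hc1 : (∫ y in x..x', (G x' y - G x x))
        = (∫ y in x..x', G x' y) - (x' - x) * G x x := by
      rw [intervalIntegral.integral_sub i2 intervalIntegrable_const,
        intervalIntegral.integral_const, smul_eq_mul]
    have hc2 : (∫ y in (0:ℝ)..x, (G x' y - G x y - (x' - x) * Gx x y))
        = (∫ y in (0:ℝ)..x, G x' y) - (∫ y in (0:ℝ)..x, G x y)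
          - (x' - x) * ∫ y in (0:ℝ)..x, Gx x y := by
      rw [intervalIntegral.integral_sub (i1.sub i3) (i4.const_mul _),
        intervalIntegral.integral_sub i1 i3, intervalIntegral.integral_const_mul]
    rw [hsplit, hc1, hc2, smul_eq_mul]
    ring
  rw [key]
  -- bound term 1
  have hb1 : ‖∫ y in x..x', (G x' y - G x x)‖ ≤ ε / 2 * |x' - x| := by
    apply intervalIntegral.norm_integral_le_of_norm_le_const
    intro y hy
    have hyI : y ∈ uIcc x x' := uIoc_subset_uIcc hy
    have hy1 : y ∈ Icc (0:ℝ) 1 := hXsub hyI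
    have hds : dist ((x', y) : ℝ × ℝ) (x, x) < δ₁ := by
      rw [Prod.dist_eq]
      simp only [Real.dist_eq, max_lt_iff]
      exact ⟨lt_of_lt_of_le hdist (min_le_left _ _),
        lt_of_le_of_lt (abs_sub_le_of_uIcc hyI) (lt_of_lt_of_le hdist (min_le_left _ _))⟩
    have := hδu₁ (x', y) ⟨hx', hy1⟩ (x, x) ⟨hx, hx⟩ hds
    rw [Real.dist_eq] at this
    exact le_of_lt this
  -- bound term 2
  have hb2 : ‖∫ y in (0:ℝ)..x, (G x' y - G x y - (x' - x) * Gx x y)‖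
      ≤ (ε / 2 * |x' - x|) * |x - 0| := by
    apply intervalIntegral.norm_integral_le_of_norm_le_const
    intro y hy
    have hy1 : y ∈ Icc (0:ℝ) 1 := h0x (uIoc_subset_uIcc hy)
    have hGxy : ContinuousOn (fun s => Gx s y) (uIcc x x') :=
      hGxc.comp (continuous_id.prodMk continuous_const).continuousOn
        (fun s hs => ⟨hXsub hs, hy1⟩)
    have hftc : G x' y - G x y = ∫ s in x..x', Gx s y :=
      (ftc_within x x' (fun u => G u y) (fun s => Gx s y) (Icc 0 1) hXsub
        (fun s hs => hd y hy1 s (hXsub hs)) hGxy).symm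
    have h2 : (x' - x) * Gx x y = ∫ s in x..x', Gx x y := by
      rw [intervalIntegral.integral_const, smul_eq_mul]
    rw [hftc, h2, ← intervalIntegral.integral_sub
      hGxy.intervalIntegrable intervalIntegrable_const]
    apply intervalIntegral.norm_integral_le_of_norm_le_const
    intro s hs
    have hsI : s ∈ uIcc x x' := uIoc_subset_uIcc hs
    have hs1 : s ∈ Icc (0:ℝ) 1 := hXsub hsI
    have hds : dist ((s:ℝ), y) (x, y) < δ₂ := by
      rw [Prod.dist_eq]
      simp only [Real.dist_eq, max_lt_iff, sub_self, abs_zero]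
      exact ⟨lt_of_le_of_lt (abs_sub_le_of_uIcc hsI) (lt_of_lt_of_le hdist (min_le_right _ _)),
        hδ₂⟩
    have := hδu₂ (s, y) ⟨hs1, hy1⟩ (x, y) ⟨hx, hy1⟩ hds
    rw [Real.dist_eq] at this
    exact le_of_lt this
  calc ‖(∫ y in x..x', (G x' y - G x x))
        + ∫ y in (0:ℝ)..x, (G x' y - G x y - (x' - x) * Gx x y)‖
      ≤ ε / 2 * |x' - x| + (ε / 2 * |x' - x|) * |x - 0| := norm_add_le_of_le hb1 hb2
    _ ≤ ε * ‖x' - x‖ := by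
        rw [Real.norm_eq_abs]
        have hx1 : |x - 0| ≤ 1 := by rw [sub_zero, abs_of_nonneg hx.1]; exact hx.2
        have hx0 : (0:ℝ) ≤ |x - 0| := abs_nonneg _
        nlinarith [abs_nonneg (x' - x), mul_nonneg (le_of_lt hε2) (abs_nonneg (x' - x))]

/-- Extend a kernel defined on the triangle `0 ≤ y ≤ x ≤ 1` to the square, preserving
continuity and the `x`-derivative. -/
lemma extend_kernel (G Gx : ℝ → ℝ → ℝ)
    (hGc : ContinuousOn (fun q : ℝ × ℝ => G q.1 q.2)
      {q : ℝ × ℝ | 0 ≤ q.2 ∧ q.2 ≤ q.1 ∧ q.1 ≤ 1})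
    (hGxc : ContinuousOn (fun q : ℝ × ℝ => Gx q.1 q.2)
      {q : ℝ × ℝ | 0 ≤ q.2 ∧ q.2 ≤ q.1 ∧ q.1 ≤ 1})
    (hd : ∀ x y, 0 ≤ y → y ≤ x → x ≤ 1 →
      HasDerivWithinAt (fun x' => G x' y) (Gx x y) (Icc y 1) x) :
    ∃ G' Gx' : ℝ → ℝ → ℝ,
      (∀ x y, 0 ≤ y → y ≤ x → x ≤ 1 → G' x y = G x y ∧ Gx' x y = Gx x y) ∧
      ContinuousOn (fun q : ℝ × ℝ => G' q.1 q.2) (Icc 0 1 ×ˢ Icc 0 1) ∧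
      ContinuousOn (fun q : ℝ × ℝ => Gx' q.1 q.2) (Icc 0 1 ×ˢ Icc 0 1) ∧
      ∀ y ∈ Icc (0:ℝ) 1, ∀ x ∈ Icc (0:ℝ) 1,
        HasDerivWithinAt (fun x' => G' x' y) (Gx' x y) (Icc 0 1) x := by
  refine ⟨fun x y => G (max x y) y + Gx (max x y) y * (x - max x y),
    fun x y => Gx (max x y) y, ?_, ?_, ?_, ?_⟩
  · intro x y h0 hyx hx1
    dsimp only
    rw [max_eq_left hyx]
    simp
  · have hm : ContinuousOn (fun q : ℝ × ℝ => ((max q.1 q.2, q.2) : ℝ × ℝ))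
        (Icc 0 1 ×ˢ Icc (0:ℝ) 1) := ((continuous_fst.max continuous_snd).prodMk
          continuous_snd).continuousOn
    have hmt : MapsTo (fun q : ℝ × ℝ => ((max q.1 q.2, q.2) : ℝ × ℝ))
        (Icc 0 1 ×ˢ Icc (0:ℝ) 1) {q : ℝ × ℝ | 0 ≤ q.2 ∧ q.2 ≤ q.1 ∧ q.1 ≤ 1} := by
      intro q hq
      exact ⟨hq.2.1, le_max_right _ _, max_le hq.1.2 hq.2.2⟩
    exact (hGc.comp hm hmt).add ((hGxc.comp hm hmt).mul
      (continuous_fst.sub (continuous_fst.max continuous_snd)).continuousOn)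
  · have hm : ContinuousOn (fun q : ℝ × ℝ => ((max q.1 q.2, q.2) : ℝ × ℝ))
        (Icc 0 1 ×ˢ Icc (0:ℝ) 1) := ((continuous_fst.max continuous_snd).prodMk
          continuous_snd).continuousOn
    have hmt : MapsTo (fun q : ℝ × ℝ => ((max q.1 q.2, q.2) : ℝ × ℝ))
        (Icc 0 1 ×ˢ Icc (0:ℝ) 1) {q : ℝ × ℝ | 0 ≤ q.2 ∧ q.2 ≤ q.1 ∧ q.1 ≤ 1} := by
      intro q hq
      exact ⟨hq.2.1, le_max_right _ _, max_le hq.1.2 hq.2.2⟩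
    exact hGxc.comp hm hmt
  · intro y hy x hx
    dsimp only
    have haff : ∀ c : ℝ, HasDerivWithinAt (fun x' => G y y + Gx y y * (x' - y)) (Gx y y)
        (Icc 0 c) x := by
      intro c
      have h1 : HasDerivWithinAt (fun x' : ℝ => Gx y y * (x' - y)) (Gx y y) (Icc 0 c) x := by
        simpa using (((hasDerivWithinAt_id x (Icc (0:ℝ) c)).sub_const y).const_mul (Gx y y))
      simpa using h1.const_add (G y y)
    rcases lt_or_ge x y with hxy | hyx
    · rw [max_eq_right (le_of_lt hxy)]
      refine (haff 1).congr_of_eventuallyEq ?_ ?_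
      · have hev : ∀ᶠ x' in nhdsWithin x (Icc 0 1), x' < y :=
          eventually_nhdsWithin_of_eventually_nhds (eventually_lt_nhds hxy)
        filter_upwards [hev] with x' hx'y
        rw [max_eq_right (le_of_lt hx'y)]
      · rw [max_eq_right (le_of_lt hxy)]
    · rw [max_eq_left hyx]
      have hIcc : Icc (0:ℝ) 1 = Icc 0 y ∪ Icc y 1 := (Icc_union_Icc_eq_Icc hy.1 hy.2).symm
      rw [hIcc]
      apply HasDerivWithinAt.union
      · -- on Icc 0 y
        rcases eq_or_lt_of_le hyx with heq | hlt
        · subst heq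
          refine (haff y).congr ?_ ?_
          · intro x' hx'
            rw [max_eq_right hx'.2]
          · rw [max_self]
        · have hnc : x ∉ closure (Icc (0:ℝ) y) := by
            rw [closure_Icc]
            intro hmem
            exact absurd hmem.2 (not_le.2 hlt)
          exact HasFDerivWithinAt.of_notMem_closure hnc
      · -- on Icc y 1
        refine (hd x y hy.1 hyx hx.2).congr ?_ ?_
        · intro x' hx'
          rw [max_eq_left hx'.1]
          ring
        · rw [max_eq_left hyx]
          ring



/-- The Volterra transformation
`η(x,t) = w(x,t) - ∫₀ˣ F(x,y) z(y,t) dy - ∫₀ˣ H(x,y) w(y,t) dy`, with kernels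
`(F,H)` solving the kernel equations on the triangle
`𝒟 = {(x,y) : 0 ≤ y ≤ x ≤ 1}`, maps the coupled hyperbolic system
`z_t = -q1 z_x + d1 w`, `w_t = q2 w_x + d2 z`, `z(0,t) = p w(0,t)` into the
pure transport equation `η_t = q2 η_x`. -/
theorem volterra_transport
    (q1 q2 : ℝ) (hq1 : 0 < q1) (hq2 : 0 < q2) (d1 d2 p : ℝ)
    (T : ℝ) (hT : 0 < T)
    (F H Fx Fy Hx Hy : ℝ → ℝ → ℝ)
    -- F, H are continuously differentiable on the triangle 𝒟:
    (hFc : ContinuousOn (fun q : ℝ × ℝ => F q.1 q.2)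
      {q : ℝ × ℝ | 0 ≤ q.2 ∧ q.2 ≤ q.1 ∧ q.1 ≤ 1})
    (hHc : ContinuousOn (fun q : ℝ × ℝ => H q.1 q.2)
      {q : ℝ × ℝ | 0 ≤ q.2 ∧ q.2 ≤ q.1 ∧ q.1 ≤ 1})
    (hFx : ∀ x y, 0 ≤ y → y ≤ x → x ≤ 1 →
      HasDerivWithinAt (fun x' => F x' y) (Fx x y) (Icc y 1) x)
    (hFy : ∀ x y, 0 ≤ y → y ≤ x → x ≤ 1 →
      HasDerivWithinAt (fun y' => F x y') (Fy x y) (Icc 0 x) y)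
    (hHx : ∀ x y, 0 ≤ y → y ≤ x → x ≤ 1 →
      HasDerivWithinAt (fun x' => H x' y) (Hx x y) (Icc y 1) x)
    (hHy : ∀ x y, 0 ≤ y → y ≤ x → x ≤ 1 →
      HasDerivWithinAt (fun y' => H x y') (Hy x y) (Icc 0 x) y)
    (hFxc : ContinuousOn (fun q : ℝ × ℝ => Fx q.1 q.2)
      {q : ℝ × ℝ | 0 ≤ q.2 ∧ q.2 ≤ q.1 ∧ q.1 ≤ 1})
    (hFyc : ContinuousOn (fun q : ℝ × ℝ => Fy q.1 q.2)
      {q : ℝ × ℝ | 0 ≤ q.2 ∧ q.2 ≤ q.1 ∧ q.1 ≤ 1})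
    (hHxc : ContinuousOn (fun q : ℝ × ℝ => Hx q.1 q.2)
      {q : ℝ × ℝ | 0 ≤ q.2 ∧ q.2 ≤ q.1 ∧ q.1 ≤ 1})
    (hHyc : ContinuousOn (fun q : ℝ × ℝ => Hy q.1 q.2)
      {q : ℝ × ℝ | 0 ≤ q.2 ∧ q.2 ≤ q.1 ∧ q.1 ≤ 1})
    -- the kernel equations on 𝒟:
    (hFpde : ∀ x y, 0 ≤ y → y ≤ x → x ≤ 1 →
      q2 * Fx x y - q1 * Fy x y = d2 * H x y)
    (hHpde : ∀ x y, 0 ≤ y → y ≤ x → x ≤ 1 →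
      q2 * Hx x y + q2 * Hy x y = d1 * F x y)
    (hFbc : ∀ x ∈ Icc (0:ℝ) 1, F x x = -d2 / (q1 + q2))
    (hHbc : ∀ x ∈ Icc (0:ℝ) 1, H x 0 = (q1 * p / q2) * F x 0)
    -- the plant states z, w, continuously differentiable on [0,1] × [0,T]:
    (z w zx zt wx wt : ℝ → ℝ → ℝ)
    (hzc : ContinuousOn (fun q : ℝ × ℝ => z q.1 q.2) (Icc 0 1 ×ˢ Icc 0 T))
    (hwc : ContinuousOn (fun q : ℝ × ℝ => w q.1 q.2) (Icc 0 1 ×ˢ Icc 0 T))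
    (hzx : ∀ x ∈ Icc (0:ℝ) 1, ∀ t ∈ Icc (0:ℝ) T,
      HasDerivWithinAt (fun x' => z x' t) (zx x t) (Icc 0 1) x)
    (hzt : ∀ x ∈ Icc (0:ℝ) 1, ∀ t ∈ Icc (0:ℝ) T,
      HasDerivWithinAt (fun t' => z x t') (zt x t) (Icc 0 T) t)
    (hwx : ∀ x ∈ Icc (0:ℝ) 1, ∀ t ∈ Icc (0:ℝ) T,
      HasDerivWithinAt (fun x' => w x' t) (wx x t) (Icc 0 1) x)
    (hwt : ∀ x ∈ Icc (0:ℝ) 1, ∀ t ∈ Icc (0:ℝ) T,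
      HasDerivWithinAt (fun t' => w x t') (wt x t) (Icc 0 T) t)
    (hzxc : ContinuousOn (fun q : ℝ × ℝ => zx q.1 q.2) (Icc 0 1 ×ˢ Icc 0 T))
    (hztc : ContinuousOn (fun q : ℝ × ℝ => zt q.1 q.2) (Icc 0 1 ×ˢ Icc 0 T))
    (hwxc : ContinuousOn (fun q : ℝ × ℝ => wx q.1 q.2) (Icc 0 1 ×ˢ Icc 0 T))
    (hwtc : ContinuousOn (fun q : ℝ × ℝ => wt q.1 q.2) (Icc 0 1 ×ˢ Icc 0 T))
    -- the coupled hyperbolic plant equations: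
    (hzpde : ∀ x ∈ Icc (0:ℝ) 1, ∀ t ∈ Icc (0:ℝ) T,
      zt x t = -q1 * zx x t + d1 * w x t)
    (hwpde : ∀ x ∈ Icc (0:ℝ) 1, ∀ t ∈ Icc (0:ℝ) T,
      wt x t = q2 * wx x t + d2 * z x t)
    (hbc : ∀ t ∈ Icc (0:ℝ) T, z 0 t = p * w 0 t)
    -- the transformed state:
    (η : ℝ → ℝ → ℝ)
    (hη : ∀ x t, η x t = w x t - (∫ y in (0:ℝ)..x, F x y * z y t)
      - ∫ y in (0:ℝ)..x, H x y * w y t) :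
    -- conclusion: ∂t η = q2 ∂x η on [0,1] × [0,T]:
    ∀ x ∈ Icc (0:ℝ) 1, ∀ t ∈ Icc (0:ℝ) T,
      ∃ e : ℝ, HasDerivWithinAt (fun x' => η x' t) e (Icc 0 1) x ∧
        HasDerivWithinAt (fun t' => η x t') (q2 * e) (Icc 0 T) t := by

  obtain ⟨F', Fx', hFeq, hF'c, hFx'c, hF'd⟩ := extend_kernel F Fx hFc hFxc hFx
  obtain ⟨H', Hx', hHeq, hH'c, hHx'c, hH'd⟩ := extend_kernel H Hx hHc hHxc hHx
  intro x hx t ht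
  have hx1 : x ≤ 1 := hx.2
  have h0x : (0:ℝ) ≤ x := hx.1
  have hsub01 : Icc (0:ℝ) x ⊆ Icc 0 1 := Icc_subset_Icc le_rfl hx1
  have hu0x : uIcc (0:ℝ) x = Icc 0 x := uIcc_of_le h0x
  -- single-variable continuity
  have cz : ContinuousOn (fun y => z y t) (Icc (0:ℝ) 1) :=
    hzc.comp (continuous_id.prodMk continuous_const).continuousOn (fun y hy => ⟨hy, ht⟩)
  have cw : ContinuousOn (fun y => w y t) (Icc (0:ℝ) 1) :=
    hwc.comp (continuous_id.prodMk continuous_const).continuousOn (fun y hy => ⟨hy, ht⟩)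
  have czx : ContinuousOn (fun y => zx y t) (Icc (0:ℝ) 1) :=
    hzxc.comp (continuous_id.prodMk continuous_const).continuousOn (fun y hy => ⟨hy, ht⟩)
  have cwx : ContinuousOn (fun y => wx y t) (Icc (0:ℝ) 1) :=
    hwxc.comp (continuous_id.prodMk continuous_const).continuousOn (fun y hy => ⟨hy, ht⟩)
  have cF : ContinuousOn (fun y => F x y) (Icc 0 x) :=
    hFc.comp (continuous_const.prodMk continuous_id).continuousOn
      (fun y hy => ⟨hy.1, hy.2, hx1⟩)
  have cFx : ContinuousOn (fun y => Fx x y) (Icc 0 x) :=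
    hFxc.comp (continuous_const.prodMk continuous_id).continuousOn
      (fun y hy => ⟨hy.1, hy.2, hx1⟩)
  have cFy : ContinuousOn (fun y => Fy x y) (Icc 0 x) :=
    hFyc.comp (continuous_const.prodMk continuous_id).continuousOn
      (fun y hy => ⟨hy.1, hy.2, hx1⟩)
  have cH : ContinuousOn (fun y => H x y) (Icc 0 x) :=
    hHc.comp (continuous_const.prodMk continuous_id).continuousOn
      (fun y hy => ⟨hy.1, hy.2, hx1⟩)
  have cHx : ContinuousOn (fun y => Hx x y) (Icc 0 x) :=
    hHxc.comp (continuous_const.prodMk continuous_id).continuousOn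
      (fun y hy => ⟨hy.1, hy.2, hx1⟩)
  have cHy : ContinuousOn (fun y => Hy x y) (Icc 0 x) :=
    hHyc.comp (continuous_const.prodMk continuous_id).continuousOn
      (fun y hy => ⟨hy.1, hy.2, hx1⟩)
  -- integrability
  have iFxz : IntervalIntegrable (fun y => Fx x y * z y t) MeasureTheory.volume 0 x :=
    (cFx.mul (cz.mono hsub01)).intervalIntegrable_of_Icc h0x
  have iFyz : IntervalIntegrable (fun y => Fy x y * z y t) MeasureTheory.volume 0 x :=
    (cFy.mul (cz.mono hsub01)).intervalIntegrable_of_Icc h0x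
  have iHz : IntervalIntegrable (fun y => H x y * z y t) MeasureTheory.volume 0 x :=
    (cH.mul (cz.mono hsub01)).intervalIntegrable_of_Icc h0x
  have iFzx : IntervalIntegrable (fun y => F x y * zx y t) MeasureTheory.volume 0 x :=
    (cF.mul (czx.mono hsub01)).intervalIntegrable_of_Icc h0x
  have iFw : IntervalIntegrable (fun y => F x y * w y t) MeasureTheory.volume 0 x :=
    (cF.mul (cw.mono hsub01)).intervalIntegrable_of_Icc h0x
  have iHxw : IntervalIntegrable (fun y => Hx x y * w y t) MeasureTheory.volume 0 x :=
    (cHx.mul (cw.mono hsub01)).intervalIntegrable_of_Icc h0x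
  have iHyw : IntervalIntegrable (fun y => Hy x y * w y t) MeasureTheory.volume 0 x :=
    (cHy.mul (cw.mono hsub01)).intervalIntegrable_of_Icc h0x
  have iHwx : IntervalIntegrable (fun y => H x y * wx y t) MeasureTheory.volume 0 x :=
    (cH.mul (cwx.mono hsub01)).intervalIntegrable_of_Icc h0x
  -- x-derivatives of the integral terms via the Leibniz rule
  have zc2 : ContinuousOn (fun q : ℝ × ℝ => z q.2 t) (Icc 0 1 ×ˢ Icc (0:ℝ) 1) :=
    hzc.comp (continuous_snd.prodMk continuous_const).continuousOn (fun q hq => ⟨hq.2, ht⟩)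
  have wc2 : ContinuousOn (fun q : ℝ × ℝ => w q.2 t) (Icc 0 1 ×ˢ Icc (0:ℝ) 1) :=
    hwc.comp (continuous_snd.prodMk continuous_const).continuousOn (fun q hq => ⟨hq.2, ht⟩)
  have LF := leibniz_rule (fun u v => F' u v * z v t) (fun u v => Fx' u v * z v t)
    (hF'c.mul zc2) (hFx'c.mul zc2)
    (fun y hy u hu => (hF'd y hy u hu).mul_const (z y t)) x hx
  have LH := leibniz_rule (fun u v => H' u v * w v t) (fun u v => Hx' u v * w v t)
    (hH'c.mul wc2) (hHx'c.mul wc2)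
    (fun y hy u hu => (hH'd y hy u hu).mul_const (w y t)) x hx
  have hFfun : ∀ x' ∈ Icc (0:ℝ) 1, (∫ y in (0:ℝ)..x', F x' y * z y t)
      = ∫ y in (0:ℝ)..x', F' x' y * z y t := by
    intro x' hx'
    apply intervalIntegral.integral_congr
    intro y hy
    rw [uIcc_of_le hx'.1] at hy
    dsimp only
    rw [(hFeq x' y hy.1 hy.2 hx'.2).1]
  have hHfun : ∀ x' ∈ Icc (0:ℝ) 1, (∫ y in (0:ℝ)..x', H x' y * w y t)
      = ∫ y in (0:ℝ)..x', H' x' y * w y t := by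
    intro x' hx'
    apply intervalIntegral.integral_congr
    intro y hy
    rw [uIcc_of_le hx'.1] at hy
    dsimp only
    rw [(hHeq x' y hy.1 hy.2 hx'.2).1]
  have hFval : (∫ y in (0:ℝ)..x, Fx' x y * z y t) = ∫ y in (0:ℝ)..x, Fx x y * z y t := by
    apply intervalIntegral.integral_congr
    intro y hy
    rw [hu0x] at hy
    dsimp only
    rw [(hFeq x y hy.1 hy.2 hx1).2]
  have hHval : (∫ y in (0:ℝ)..x, Hx' x y * w y t) = ∫ y in (0:ℝ)..x, Hx x y * w y t := by
    apply intervalIntegral.integral_congr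
    intro y hy
    rw [hu0x] at hy
    dsimp only
    rw [(hHeq x y hy.1 hy.2 hx1).2]
  have AF : HasDerivWithinAt (fun x' => ∫ y in (0:ℝ)..x', F x' y * z y t)
      (F x x * z x t + ∫ y in (0:ℝ)..x, Fx x y * z y t) (Icc 0 1) x := by
    have h1 : (F' x x) * z x t = F x x * z x t := by
      rw [(hFeq x x hx.1 le_rfl hx1).1]
    rw [← h1, ← hFval]
    exact LF.congr (fun x' hx' => hFfun x' hx') (hFfun x hx)
  have AH : HasDerivWithinAt (fun x' => ∫ y in (0:ℝ)..x', H x' y * w y t)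
      (H x x * w x t + ∫ y in (0:ℝ)..x, Hx x y * w y t) (Icc 0 1) x := by
    have h1 : (H' x x) * w x t = H x x * w x t := by
      rw [(hHeq x x hx.1 le_rfl hx1).1]
    rw [← h1, ← hHval]
    exact LH.congr (fun x' hx' => hHfun x' hx') (hHfun x hx)
  -- t-derivatives of the integral terms
  have F'c1 : ContinuousOn (fun q : ℝ × ℝ => F' x q.1) (Icc 0 1 ×ˢ Icc (0:ℝ) T) :=
    hF'c.comp (continuous_const.prodMk continuous_fst).continuousOn (fun q hq => ⟨hx, hq.1⟩)
  have H'c1 : ContinuousOn (fun q : ℝ × ℝ => H' x q.1) (Icc 0 1 ×ˢ Icc (0:ℝ) T) :=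
    hH'c.comp (continuous_const.prodMk continuous_fst).continuousOn (fun q hq => ⟨hx, hq.1⟩)
  have AtF' := param_deriv 0 T (fun y s => F' x y * z y s) (fun y s => F' x y * zt y s)
    (F'c1.mul hzc) (F'c1.mul hztc)
    (fun y hy s hs => (hzt y hy s hs).const_mul (F' x y)) x hx t ht
  have AtH' := param_deriv 0 T (fun y s => H' x y * w y s) (fun y s => H' x y * wt y s)
    (H'c1.mul hwc) (H'c1.mul hwtc)
    (fun y hy s hs => (hwt y hy s hs).const_mul (H' x y)) x hx t ht
  have hFfunT : ∀ s : ℝ, (∫ y in (0:ℝ)..x, F x y * z y s)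
      = ∫ y in (0:ℝ)..x, F' x y * z y s := by
    intro s
    apply intervalIntegral.integral_congr
    intro y hy
    rw [hu0x] at hy
    dsimp only
    rw [(hFeq x y hy.1 hy.2 hx1).1]
  have hHfunT : ∀ s : ℝ, (∫ y in (0:ℝ)..x, H x y * w y s)
      = ∫ y in (0:ℝ)..x, H' x y * w y s := by
    intro s
    apply intervalIntegral.integral_congr
    intro y hy
    rw [hu0x] at hy
    dsimp only
    rw [(hHeq x y hy.1 hy.2 hx1).1]
  have hFvalT : (∫ y in (0:ℝ)..x, F' x y * zt y t) = ∫ y in (0:ℝ)..x, F x y * zt y t := by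
    apply intervalIntegral.integral_congr
    intro y hy
    rw [hu0x] at hy
    dsimp only
    rw [(hFeq x y hy.1 hy.2 hx1).1]
  have hHvalT : (∫ y in (0:ℝ)..x, H' x y * wt y t) = ∫ y in (0:ℝ)..x, H x y * wt y t := by
    apply intervalIntegral.integral_congr
    intro y hy
    rw [hu0x] at hy
    dsimp only
    rw [(hHeq x y hy.1 hy.2 hx1).1]
  have AtF : HasDerivWithinAt (fun t' => ∫ y in (0:ℝ)..x, F x y * z y t')
      (∫ y in (0:ℝ)..x, F x y * zt y t) (Icc 0 T) t := by
    rw [← hFvalT]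
    exact AtF'.congr (fun t' _ => hFfunT t') (hFfunT t)
  have AtH : HasDerivWithinAt (fun t' => ∫ y in (0:ℝ)..x, H x y * w y t')
      (∫ y in (0:ℝ)..x, H x y * wt y t) (Icc 0 T) t := by
    rw [← hHvalT]
    exact AtH'.congr (fun t' _ => hHfunT t') (hHfunT t)
  -- integration by parts identities
  have E1 : (∫ y in (0:ℝ)..x, (Fy x y * z y t + F x y * zx y t))
      = F x x * z x t - F x 0 * z 0 t :=
    ftc_within' 0 x h0x (fun y => F x y * z y t)
      (fun y => Fy x y * z y t + F x y * zx y t) (Icc 0 x) (subset_refl _)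
      (fun y hy => (hFy x y hy.1 hy.2 hx1).mul ((hzx y (hsub01 hy) t ht).mono hsub01))
      ((cFy.mul (cz.mono hsub01)).add (cF.mul (czx.mono hsub01)))
  have E2 : (∫ y in (0:ℝ)..x, (Hy x y * w y t + H x y * wx y t))
      = H x x * w x t - H x 0 * w 0 t :=
    ftc_within' 0 x h0x (fun y => H x y * w y t)
      (fun y => Hy x y * w y t + H x y * wx y t) (Icc 0 x) (subset_refl _)
      (fun y hy => (hHy x y hy.1 hy.2 hx1).mul ((hwx y (hsub01 hy) t ht).mono hsub01))
      ((cHy.mul (cw.mono hsub01)).add (cH.mul (cwx.mono hsub01)))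
  rw [intervalIntegral.integral_add iFyz iFzx] at E1
  rw [intervalIntegral.integral_add iHyw iHwx] at E2
  -- kernel PDE identities
  have P1 : q2 * (∫ y in (0:ℝ)..x, Fx x y * z y t)
      - q1 * (∫ y in (0:ℝ)..x, Fy x y * z y t)
      - d2 * (∫ y in (0:ℝ)..x, H x y * z y t) = 0 := by
    rw [← intervalIntegral.integral_const_mul, ← intervalIntegral.integral_const_mul,
      ← intervalIntegral.integral_const_mul,
      ← intervalIntegral.integral_sub (iFxz.const_mul q2) (iFyz.const_mul q1),
      ← intervalIntegral.integral_sub ((iFxz.const_mul q2).sub (iFyz.const_mul q1))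
        (iHz.const_mul d2)]
    refine Eq.trans (intervalIntegral.integral_congr (g := fun _ => (0:ℝ)) ?_) (by simp)
    intro y hy
    rw [hu0x] at hy
    have h := hFpde x y hy.1 hy.2 hx1
    dsimp only
    linear_combination (z y t) * h
  have P2 : q2 * (∫ y in (0:ℝ)..x, Hx x y * w y t)
      + q2 * (∫ y in (0:ℝ)..x, Hy x y * w y t)
      - d1 * (∫ y in (0:ℝ)..x, F x y * w y t) = 0 := by
    rw [← intervalIntegral.integral_const_mul, ← intervalIntegral.integral_const_mul,
      ← intervalIntegral.integral_const_mul,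
      ← intervalIntegral.integral_add (iHxw.const_mul q2) (iHyw.const_mul q2),
      ← intervalIntegral.integral_sub ((iHxw.const_mul q2).add (iHyw.const_mul q2))
        (iFw.const_mul d1)]
    refine Eq.trans (intervalIntegral.integral_congr (g := fun _ => (0:ℝ)) ?_) (by simp)
    intro y hy
    rw [hu0x] at hy
    have h := hHpde x y hy.1 hy.2 hx1
    dsimp only
    linear_combination (w y t) * h
  -- boundary conditions
  have hq12 : q1 + q2 ≠ 0 := by positivity
  have h6 : F x x * (q1 + q2) = -d2 := by
    rw [hFbc x hx]
    field_simp
  have h7 : q2 * H x 0 = q1 * p * F x 0 := by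
    rw [hHbc x hx]
    field_simp
  have h8 : z 0 t = p * w 0 t := hbc t ht
  -- substitute the plant PDEs inside the t-derivative integrals
  have hzt_int : (∫ y in (0:ℝ)..x, F x y * zt y t)
      = -q1 * (∫ y in (0:ℝ)..x, F x y * zx y t) + d1 * ∫ y in (0:ℝ)..x, F x y * w y t := by
    have hc : EqOn (fun y => F x y * zt y t)
        (fun y => -q1 * (F x y * zx y t) + d1 * (F x y * w y t)) (uIcc (0:ℝ) x) := by
      intro y hy
      rw [hu0x] at hy
      have h := hzpde y (hsub01 hy) t ht
      dsimp only
      rw [h]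
      ring
    rw [intervalIntegral.integral_congr hc,
      intervalIntegral.integral_add (iFzx.const_mul _) (iFw.const_mul _),
      intervalIntegral.integral_const_mul, intervalIntegral.integral_const_mul]
  have hwt_int : (∫ y in (0:ℝ)..x, H x y * wt y t)
      = q2 * (∫ y in (0:ℝ)..x, H x y * wx y t) + d2 * ∫ y in (0:ℝ)..x, H x y * z y t := by
    have hc : EqOn (fun y => H x y * wt y t)
        (fun y => q2 * (H x y * wx y t) + d2 * (H x y * z y t)) (uIcc (0:ℝ) x) := by
      intro y hy
      rw [hu0x] at hy
      have h := hwpde y (hsub01 hy) t ht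
      dsimp only
      rw [h]
      ring
    rw [intervalIntegral.integral_congr hc,
      intervalIntegral.integral_add (iHwx.const_mul _) (iHz.const_mul _),
      intervalIntegral.integral_const_mul, intervalIntegral.integral_const_mul]
  have h1w : wt x t = q2 * wx x t + d2 * z x t := hwpde x hx t ht
  refine ⟨wx x t - (F x x * z x t + ∫ y in (0:ℝ)..x, Fx x y * z y t)
    - (H x x * w x t + ∫ y in (0:ℝ)..x, Hx x y * w y t), ?_, ?_⟩
  · simp only [hη]
    exact ((hwx x hx t ht).sub AF).sub AH
  · simp only [hη]
    have Dt : HasDerivWithinAt (fun t' => w x t' - (∫ y in (0:ℝ)..x, F x y * z y t')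
        - ∫ y in (0:ℝ)..x, H x y * w y t')
        (wt x t - (∫ y in (0:ℝ)..x, F x y * zt y t) - ∫ y in (0:ℝ)..x, H x y * wt y t)
        (Icc 0 T) t := ((hwt x hx t ht).sub AtF).sub AtH
    have hval : q2 * (wx x t - (F x x * z x t + ∫ y in (0:ℝ)..x, Fx x y * z y t)
        - (H x x * w x t + ∫ y in (0:ℝ)..x, Hx x y * w y t))
        = wt x t - (∫ y in (0:ℝ)..x, F x y * zt y t)
          - ∫ y in (0:ℝ)..x, H x y * wt y t := by
      rw [hzt_int, hwt_int, h1w]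
      linear_combination (-q1) * E1 - P1 + q2 * E2 - P2 - (z x t) * h6
        + (q1 * F x 0) * h8 - (w 0 t) * h7
    rw [hval]
    exact Dt
end
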